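/- arXiv:2007.08923 — 5 statements merged into one kernel-verified Lean document; each statement's English description precedes it below -/
import Mathlib

section
/- Let s ≥ 0 and β ∈ ℝ. There exists C > 0 (depending only on s and β) such that for all t, α ∈ ℝ, all M ≥ 1, and all measurable f, g : ℝ → ℂ with ‖f‖_{L²_s}, ‖g‖_{L²_s} < ∞, the function F(ξ) = ∫_ℝ 1{|Φ_β(ξ, ξ₁, ξ − ξ₁) − α| ≤ M} · (iξ) · exp(i t Φ_β(ξ, ξ₁, ξ − ξ₁)) · f(ξ₁) · g(ξ − ξ₁) dξ₁ satisfies ‖F‖_{L²_s} ≤ C · M^{1/2} · ‖f‖_{L²_s} ‖g‖_{L²_s}. -/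
open MeasureTheory

/-- The Kawahara modulation function. -/
noncomputable def Phi (β ξ ξ₁ ξ₂ : ℝ) : ℝ :=
  ξ₁ ^ 5 + ξ₂ ^ 5 - ξ ^ 5 + β * (ξ₁ ^ 3 + ξ₂ ^ 3 - ξ ^ 3)

/-- The weighted norm `‖f‖_{L²_s} = (∫ ⟨ξ⟩^{2s} |f(ξ)|² dξ)^{1/2}`, with `⟨ξ⟩^{2s} = (1+ξ²)^s`. -/
noncomputable def wnorm (s : ℝ) (f : ℝ → ℂ) : ℝ :=
  (∫ ξ : ℝ, (1 + ξ ^ 2) ^ s * ‖f ξ‖ ^ 2) ^ ((1 : ℝ) / 2)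

open ENNReal NNReal Set

lemma ofReal_norm_eq_coe_nnnorm {E : Type*} [SeminormedAddGroup E] (a : E) :
    ENNReal.ofReal ‖a‖ = (‖a‖₊ : ℝ≥0∞) := ENNReal.ofReal_eq_coe_nnreal _

lemma sq_add_le (a b : ℝ≥0∞) : (a+b)^2 ≤ 2*a^2 + 2*b^2 := by
  rcases eq_or_ne a ⊤ with ha | ha
  · simp [ha, ENNReal.top_pow]
  rcases eq_or_ne b ⊤ with hb | hb
  · simp [hb, ENNReal.top_pow]
  lift a to ℝ≥0 using ha
  lift b to ℝ≥0 using hb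
  rw [← ENNReal.coe_add, ← ENNReal.coe_pow, ← ENNReal.coe_pow, ← ENNReal.coe_pow]
  norm_cast
  rw [← NNReal.coe_le_coe]
  push_cast
  nlinarith [NNReal.coe_nonneg a, NNReal.coe_nonneg b, sq_nonneg ((a:ℝ) - b)]

lemma mul_le_sq_add_sq (a b : ℝ≥0∞) : a*b ≤ a^2 + b^2 := by
  rcases le_total a b with h | h
  · calc a*b ≤ b*b := mul_le_mul_left h b
    _ = b^2 := (sq b).symm
    _ ≤ a^2 + b^2 := le_add_self
  · calc a*b ≤ a*a := mul_le_mul_right h a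
    _ = a^2 := (sq a).symm
    _ ≤ a^2 + b^2 := le_self_add

lemma lCS (u v : ℝ → ℝ≥0∞) (hu : Measurable u) (hv : Measurable v) :
    (∫⁻ x, u x * v x)^2 ≤ (∫⁻ x, (u x)^2) * (∫⁻ x, (v x)^2) := by
  have hpq : Real.HolderConjugate 2 2 := Real.HolderConjugate.two_two
  have h := ENNReal.lintegral_mul_le_Lp_mul_Lq volume hpq hu.aemeasurable hv.aemeasurable
  have h2 : ∀ w : ℝ → ℝ≥0∞, (∫⁻ x, w x ^ (2:ℝ)) = ∫⁻ x, (w x)^2 := by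
    intro w; congr 1; funext x; rw [← ENNReal.rpow_natCast (w x) 2]; norm_num
  rw [h2, h2] at h
  calc (∫⁻ x, u x * v x)^2 ≤ ((∫⁻ x, (u x)^2) ^ (1/(2:ℝ)) * (∫⁻ x, (v x)^2) ^ (1/(2:ℝ)))^2 := by
        exact pow_le_pow_left' h 2
    _ = (∫⁻ x, (u x)^2) * (∫⁻ x, (v x)^2) := by
        rw [mul_pow, ← ENNReal.rpow_natCast (_ ^ (1/(2:ℝ))) 2, ← ENNReal.rpow_natCast (_ ^ (1/(2:ℝ))) 2,
          ← ENNReal.rpow_mul, ← ENNReal.rpow_mul]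
        norm_num

lemma lintegral_sub_left (ψ : ℝ → ℝ≥0∞) (a : ℝ) : (∫⁻ x, ψ (a - x)) = ∫⁻ x, ψ x := by
  have h1 : (∫⁻ x, ψ (a + x)) = ∫⁻ x, ψ x := lintegral_add_left_eq_self ψ a
  have h2 : (∫⁻ x, ψ (a + (-x))) = ∫⁻ x, ψ (a + x) := by
    have := (lintegral_map_equiv (μ := (volume : Measure ℝ)) (fun y => ψ (a + y)) (MeasurableEquiv.neg ℝ)).symm
    simpa [Measure.map_neg_eq_self (volume : Measure ℝ)] using this
  calc (∫⁻ x, ψ (a - x)) = ∫⁻ x, ψ (a + (-x)) := by simp [sub_eq_add_neg]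
    _ = ∫⁻ x, ψ x := by rw [h2, h1]

lemma lintegral_sub_right (ψ : ℝ → ℝ≥0∞) (a : ℝ) : (∫⁻ x, ψ (x - a)) = ∫⁻ x, ψ x := by
  simpa [sub_eq_add_neg] using lintegral_add_right_eq_self ψ (-a)

lemma dist_le_of_le_deriv {D : Set ℝ} (hD : Convex ℝ D) {h : ℝ → ℝ}
    (hdiff : Differentiable ℝ h) {m α M : ℝ} (hm : 0 < m)
    (hder : ∀ x ∈ D, m ≤ deriv h x) :
    ∀ x ∈ D, ∀ y ∈ D, |h x - α| ≤ M → |h y - α| ≤ M → |x - y| ≤ 2*M/m := by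
  have key : ∀ x ∈ D, ∀ y ∈ D, x ≤ y → |h x - α| ≤ M → |h y - α| ≤ M →
      |x - y| ≤ 2*M/m := by
    intro x hx y hy hxy h1 h2
    have hmvt := hD.mul_sub_le_image_sub_of_le_deriv hdiff.continuous.continuousOn
      hdiff.differentiableOn (fun z hz => hder z (interior_subset hz)) x hx y hy hxy
    rw [abs_sub_comm, abs_of_nonneg (by linarith : (0:ℝ) ≤ y - x), le_div_iff₀ hm]
    rw [abs_le] at h1 h2
    nlinarith
  intro x hx y hy h1 h2
  rcases le_total x y with hxy | hxy
  · exact key x hx y hy hxy h1 h2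
  · rw [abs_sub_comm]; exact key y hy x hx hxy h2 h1

lemma vol_sublevel {D : Set ℝ} (hD : Convex ℝ D) {h : ℝ → ℝ}
    (hdiff : Differentiable ℝ h) {m α M : ℝ} (hm : 0 < m) (hM : 0 ≤ M)
    (hder : (∀ x ∈ D, m ≤ deriv h x) ∨ (∀ x ∈ D, deriv h x ≤ -m)) :
    volume {x ∈ D | |h x - α| ≤ M} ≤ ENNReal.ofReal (4*M/m) := by
  have hdist : ∀ x ∈ D, ∀ y ∈ D, |h x - α| ≤ M → |h y - α| ≤ M → |x - y| ≤ 2*M/m := by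
    rcases hder with hder | hder
    · exact dist_le_of_le_deriv hD hdiff hm hder
    · intro x hx y hy h1 h2
      have hder' : ∀ z ∈ D, m ≤ deriv (fun w => -h w) z := by
        intro z hz
        rw [deriv.fun_neg]
        linarith [hder z hz]
      have e : ∀ z : ℝ, |(-h z) - (-α)| = |h z - α| := by
        intro z
        rw [show (-h z) - (-α) = -(h z - α) by ring, abs_neg]
      exact dist_le_of_le_deriv (α := -α) hD hdiff.neg hm hder' x hx y hy
        (by rw [Pi.neg_apply, e]; exact h1) (by rw [Pi.neg_apply, e]; exact h2)
  set S := {x ∈ D | |h x - α| ≤ M} with hSdef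
  rcases S.eq_empty_or_nonempty with hS | ⟨x₀, hx₀⟩
  · simp [hS]
  have hsub : S ⊆ Metric.closedBall x₀ (2*M/m) := by
    intro y hy
    rw [Metric.mem_closedBall, Real.dist_eq]
    exact hdist y hy.1 x₀ hx₀.1 hy.2 hx₀.2
  calc volume S ≤ volume (Metric.closedBall x₀ (2*M/m)) := measure_mono hsub
    _ = ENNReal.ofReal (2*(2*M/m)) := Real.volume_closedBall _ _
    _ = ENNReal.ofReal (4*M/m) := by rw [show 2*(2*M/m) = 4*M/m by ring]

lemma hasDerivAt_phi1 (β ξ ξ₁ : ℝ) :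
    HasDerivAt (fun x => Phi β ξ x (ξ - x))
      (ξ * (2*ξ₁ - ξ) * (5*(ξ₁^2 + (ξ-ξ₁)^2) + 3*β)) ξ₁ := by
  have hsub : HasDerivAt (fun x : ℝ => ξ - x) (-1) ξ₁ := by
    simpa using (hasDerivAt_id ξ₁).const_sub ξ
  have h1 : HasDerivAt (fun x : ℝ => x^5) (5*ξ₁^4) ξ₁ := by
    simpa using hasDerivAt_pow 5 ξ₁
  have h2 : HasDerivAt (fun x : ℝ => (ξ - x)^5) ((5*(ξ-ξ₁)^4) * (-1)) ξ₁ := by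
    simpa using hsub.fun_pow 5
  have h3 : HasDerivAt (fun x : ℝ => x^3) (3*ξ₁^2) ξ₁ := by
    simpa using hasDerivAt_pow 3 ξ₁
  have h4 : HasDerivAt (fun x : ℝ => (ξ - x)^3) ((3*(ξ-ξ₁)^2) * (-1)) ξ₁ := by
    simpa using hsub.fun_pow 3
  have hbig := (((h1.fun_add h2).sub_const (ξ^5)).fun_add
    ((((h3.fun_add h4).sub_const (ξ^3))).const_mul β))
  have heq : (fun x : ℝ => x^5 + (ξ-x)^5 - ξ^5 + β*(x^3+(ξ-x)^3-ξ^3))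
      = (fun x => Phi β ξ x (ξ - x)) := by
    funext x; simp [Phi]
  rw [heq] at hbig
  refine hbig.congr_deriv ?_
  ring

lemma hasDerivAt_phi2 (β ξ₁ ξ : ℝ) :
    HasDerivAt (fun x => Phi β x ξ₁ (x - ξ₁))
      (ξ₁ * (ξ₁ - 2*ξ) * (5*((ξ-ξ₁)^2 + ξ^2) + 3*β)) ξ := by
  have hsub : HasDerivAt (fun x : ℝ => x - ξ₁) 1 ξ := by
    simpa using (hasDerivAt_id ξ).sub_const ξ₁
  have h2 : HasDerivAt (fun x : ℝ => (x - ξ₁)^5) ((5*(ξ-ξ₁)^4) * 1) ξ := by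
    simpa using hsub.fun_pow 5
  have h1 : HasDerivAt (fun x : ℝ => x^5) (5*ξ^4) ξ := by
    simpa using hasDerivAt_pow 5 ξ
  have h4 : HasDerivAt (fun x : ℝ => (x - ξ₁)^3) ((3*(ξ-ξ₁)^2) * 1) ξ := by
    simpa using hsub.fun_pow 3
  have h3 : HasDerivAt (fun x : ℝ => x^3) (3*ξ^2) ξ := by
    simpa using hasDerivAt_pow 3 ξ
  have hbig := ((((hasDerivAt_const ξ (ξ₁^5)).fun_add h2).fun_sub h1).fun_add
    ((((hasDerivAt_const ξ (ξ₁^3)).fun_add h4).fun_sub h3).const_mul β))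
  have heq : (fun x : ℝ => ξ₁^5 + (x-ξ₁)^5 - x^5 + β*(ξ₁^3+(x-ξ₁)^3-x^3))
      = (fun x => Phi β x ξ₁ (x - ξ₁)) := by
    funext x; simp [Phi]
  rw [heq] at hbig
  refine hbig.congr_deriv ?_
  ring

lemma measB (β M α ξ : ℝ) (hM : 1 ≤ M) (hξ : 3 + |β| ≤ |ξ|) :
    ENNReal.ofReal (ξ^2) *
      volume {ξ₁ : ℝ | 1 ≤ |2*ξ₁ - ξ| ∧ |Phi β ξ ξ₁ (ξ - ξ₁) - α| ≤ M}
      ≤ ENNReal.ofReal (8*M) := by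
  have hβ : |β| ≤ |ξ| - 3 := by linarith
  have hξ3 : 3 ≤ |ξ| := by linarith [abs_nonneg β]
  have hξ0 : 0 < |ξ| := by linarith
  set h : ℝ → ℝ := fun x => Phi β ξ x (ξ - x) with hh
  have hdiff : Differentiable ℝ h := fun x => (hasDerivAt_phi1 β ξ x).differentiableAt
  have hd : ∀ x : ℝ, deriv h x = ξ * (2*x - ξ) * (5*(x^2 + (ξ-x)^2) + 3*β) :=
    fun x => (hasDerivAt_phi1 β ξ x).deriv
  have hm : (0:ℝ) < |ξ|^3 := by positivity
  -- key pointwise facts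
  have hP : ∀ x : ℝ, ξ^2 ≤ 5*(x^2 + (ξ-x)^2) + 3*β := by
    intro x
    have h1 : ξ^2 = |ξ|^2 := (sq_abs ξ).symm
    nlinarith [sq_nonneg (2*x - ξ), abs_nonneg β, neg_abs_le β,
      mul_nonneg (by linarith : (0:ℝ) ≤ |ξ| - 3) (abs_nonneg ξ)]
  have hP0 : ∀ x : ℝ, (0:ℝ) ≤ 5*(x^2 + (ξ-x)^2) + 3*β :=
    fun x => le_trans (sq_nonneg ξ) (hP x)
  have hder1 : ∀ x ∈ Set.Ici ((ξ+1)/2),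
      (0 ≤ ξ → |ξ|^3 ≤ deriv h x) ∧ (ξ ≤ 0 → deriv h x ≤ -(|ξ|^3)) := by
    intro x hx
    rw [Set.mem_Ici] at hx
    have h2x : 1 ≤ 2*x - ξ := by linarith
    have hPx := hP x
    rw [hd x]
    have hstep : ξ^2 ≤ (2*x-ξ) * (5*(x^2 + (ξ-x)^2) + 3*β) := by
      nlinarith [hPx, hP0 x, mul_nonneg (by linarith : (0:ℝ) ≤ 2*x-ξ-1) (hP0 x)]
    constructor
    · intro hξpos
      have habs : |ξ| = ξ := abs_of_nonneg hξpos
      rw [habs]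
      nlinarith [mul_nonneg hξpos (sub_nonneg.mpr hstep)]
    · intro hξneg
      have habs : |ξ| = -ξ := abs_of_nonpos hξneg
      rw [habs]
      nlinarith [mul_nonneg (neg_nonneg.mpr hξneg) (sub_nonneg.mpr hstep)]
  have hder2 : ∀ x ∈ Set.Iic ((ξ-1)/2),
      (0 ≤ ξ → deriv h x ≤ -(|ξ|^3)) ∧ (ξ ≤ 0 → |ξ|^3 ≤ deriv h x) := by
    intro x hx
    rw [Set.mem_Iic] at hx
    have h2x : 2*x - ξ ≤ -1 := by linarith
    have hPx := hP x
    rw [hd x]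
    have hstep : ξ^2 ≤ (ξ-2*x) * (5*(x^2 + (ξ-x)^2) + 3*β) := by
      nlinarith [hPx, hP0 x, mul_nonneg (by linarith : (0:ℝ) ≤ ξ-2*x-1) (hP0 x)]
    constructor
    · intro hξpos
      have habs : |ξ| = ξ := abs_of_nonneg hξpos
      rw [habs]
      nlinarith [mul_nonneg hξpos (sub_nonneg.mpr hstep)]
    · intro hξneg
      have habs : |ξ| = -ξ := abs_of_nonpos hξneg
      rw [habs]
      nlinarith [mul_nonneg (neg_nonneg.mpr hξneg) (sub_nonneg.mpr hstep)]
  have hvol1 : volume {x ∈ Set.Ici ((ξ+1)/2) | |h x - α| ≤ M}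
      ≤ ENNReal.ofReal (4*M/(|ξ|^3)) := by
    apply vol_sublevel (convex_Ici _) hdiff hm (by linarith)
    rcases le_total 0 ξ with hs | hs
    · exact Or.inl (fun x hx => (hder1 x hx).1 hs)
    · exact Or.inr (fun x hx => (hder1 x hx).2 hs)
  have hvol2 : volume {x ∈ Set.Iic ((ξ-1)/2) | |h x - α| ≤ M}
      ≤ ENNReal.ofReal (4*M/(|ξ|^3)) := by
    apply vol_sublevel (convex_Iic _) hdiff hm (by linarith)
    rcases le_total 0 ξ with hs | hs
    · exact Or.inr (fun x hx => (hder2 x hx).1 hs)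
    · exact Or.inl (fun x hx => (hder2 x hx).2 hs)
  have hsplit : {ξ₁ : ℝ | 1 ≤ |2*ξ₁ - ξ| ∧ |Phi β ξ ξ₁ (ξ - ξ₁) - α| ≤ M}
      ⊆ {x ∈ Set.Ici ((ξ+1)/2) | |h x - α| ≤ M} ∪ {x ∈ Set.Iic ((ξ-1)/2) | |h x - α| ≤ M} := by
    intro x hx
    obtain ⟨hx1, hx2⟩ := hx
    rcases le_abs.mp hx1 with hc | hc
    · left; exact ⟨by rw [Set.mem_Ici]; linarith, hx2⟩
    · right; exact ⟨by rw [Set.mem_Iic]; linarith, hx2⟩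
  calc ENNReal.ofReal (ξ^2) *
      volume {ξ₁ : ℝ | 1 ≤ |2*ξ₁ - ξ| ∧ |Phi β ξ ξ₁ (ξ - ξ₁) - α| ≤ M}
      ≤ ENNReal.ofReal (ξ^2) * (ENNReal.ofReal (4*M/(|ξ|^3)) + ENNReal.ofReal (4*M/(|ξ|^3))) := by
        apply mul_le_mul_right
        exact le_trans (measure_mono hsplit) (le_trans (measure_union_le _ _) (add_le_add hvol1 hvol2))
    _ = ENNReal.ofReal (ξ^2 * (4*M/(|ξ|^3) + 4*M/(|ξ|^3))) := by
        rw [← ENNReal.ofReal_add (by positivity) (by positivity),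
          ← ENNReal.ofReal_mul (sq_nonneg ξ)]
    _ ≤ ENNReal.ofReal (8*M) := by
        apply ENNReal.ofReal_le_ofReal
        have hξne : ξ ≠ 0 := fun hz => by rw [hz] at hξ0; simp at hξ0
        have h1 : ξ^2 * (4*M/(|ξ|^3) + 4*M/(|ξ|^3)) = 8*M/|ξ| := by
          rw [show |ξ|^3 = ξ^2 * |ξ| by rw [← sq_abs]; ring]
          rw [← add_div, mul_div_assoc', eq_div_iff (ne_of_gt hξ0)]
          field_simp
          ring
        rw [h1]
        calc 8*M/|ξ| ≤ 8*M/1 := by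
              apply div_le_div_of_nonneg_left (by linarith) (by norm_num) (by linarith)
          _ = 8*M := by norm_num

lemma measC (β M α : ℝ) (hM : 1 ≤ M) (ξ₁ : ℝ) :
    ∫⁻ ξ in {ξ : ℝ | 3 + |β| < |ξ| ∧ |2*ξ₁ - ξ| < 1 ∧ |Phi β ξ ξ₁ (ξ - ξ₁) - α| ≤ M},
      ENNReal.ofReal (ξ^2) ≤ ENNReal.ofReal (72*M) := by
  set S := {ξ : ℝ | 3 + |β| < |ξ| ∧ |2*ξ₁ - ξ| < 1 ∧ |Phi β ξ ξ₁ (ξ - ξ₁) - α| ≤ M} with hS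
  have hβ0 : (0:ℝ) ≤ |β| := abs_nonneg β
  have hub : ∀ ξ ∈ S, 1 ≤ |ξ₁| ∧ ξ^2 ≤ 9*ξ₁^2 := by
    intro ξ hξ
    obtain ⟨h1, h2, _⟩ := hξ
    have ha : |ξ| - |2*ξ₁| ≤ |2*ξ₁ - ξ| := by
      have := abs_sub_abs_le_abs_sub ξ (2*ξ₁)
      rw [abs_sub_comm] at this
      linarith
    have h2a : |2*ξ₁| = 2*|ξ₁| := by rw [abs_mul]; simp
    have hξ₁1 : 1 ≤ |ξ₁| := by rw [h2a] at ha; linarith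
    refine ⟨hξ₁1, ?_⟩
    have hξle : |ξ| ≤ 2*|ξ₁| + 1 := by rw [h2a] at ha; linarith
    have h3 : |ξ| ≤ 3*|ξ₁| := by linarith
    nlinarith [abs_nonneg ξ, abs_nonneg ξ₁, sq_abs ξ, sq_abs ξ₁]
  rcases lt_or_ge |ξ₁| 1 with hsmall | hbig
  · have hempty : S = ∅ := by
      rw [Set.eq_empty_iff_forall_notMem]
      intro ξ hξ
      linarith [(hub ξ hξ).1]
    rw [hempty]
    simp
  -- main case
  have hz : ξ₁ ≠ 0 := by intro hzz; rw [hzz] at hbig; simp at hbig; linarith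
  set g : ℝ → ℝ := fun x => Phi β x ξ₁ (x - ξ₁) with hg
  have hdiff : Differentiable ℝ g := fun x => (hasDerivAt_phi2 β ξ₁ x).differentiableAt
  have hd : ∀ x : ℝ, deriv g x = ξ₁ * (ξ₁ - 2*x) * (5*((x-ξ₁)^2 + x^2) + 3*β) :=
    fun x => (hasDerivAt_phi2 β ξ₁ x).deriv
  have hm : (0:ℝ) < ξ₁^4 := by positivity
  have hvol : volume S ≤ ENNReal.ofReal (4*M/ξ₁^4) := by
    rcases le_abs.mp hbig with hpos | hneg
    · -- 1 ≤ ξ₁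
      have hsub : S ⊆ {x ∈ Set.Ioo (max (3+|β|) (2*ξ₁-1)) (2*ξ₁+1) | |g x - α| ≤ M} := by
        intro ξ hξ
        obtain ⟨h1, h2, h3⟩ := hξ
        rw [abs_lt] at h2
        have hξpos : 0 < ξ := by
          rcases abs_cases ξ with ⟨he, _⟩ | ⟨he, _⟩
          · rw [he] at h1; linarith
          · rw [he] at h1; linarith
        rw [abs_of_pos hξpos] at h1
        exact ⟨⟨max_lt h1 (by linarith), by linarith⟩, h3⟩
      refine le_trans (measure_mono hsub) ?_
      apply vol_sublevel (convex_Ioo _ _) hdiff hm (by linarith)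
      right
      intro x hx
      obtain ⟨hx1, hx2⟩ := hx
      have hxK : 3 + |β| < x := lt_of_le_of_lt (le_max_left _ _) hx1
      have hxl : 2*ξ₁ - 1 < x := lt_of_le_of_lt (le_max_right _ _) hx1
      have hx3 : 3 < x := by linarith
      rw [hd x]
      have hP : 4*x^2 ≤ 5*((x-ξ₁)^2 + x^2) + 3*β := by
        nlinarith [sq_nonneg (x-ξ₁), neg_abs_le β]
      have hP0 : (0:ℝ) ≤ 5*((x-ξ₁)^2 + x^2) + 3*β := by nlinarith
      have hfac : ξ₁ - 2*x ≤ -x := by linarith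
      have hstep : (ξ₁ - 2*x) * (5*((x-ξ₁)^2 + x^2) + 3*β) ≤ -(4*x^3) := by
        nlinarith [mul_nonneg (by linarith : (0:ℝ) ≤ 2*x - ξ₁ - x) hP0, sq_nonneg x]
      have hxξ₁ : ξ₁ ≤ x := by linarith
      have h1 : ξ₁ * ((ξ₁-2*x) * (5*((x-ξ₁)^2 + x^2) + 3*β)) ≤ ξ₁ * (-(4*x^3)) :=
        mul_le_mul_of_nonneg_left hstep (by linarith)
      have h2 : ξ₁^3 ≤ x^3 := pow_le_pow_left₀ (by linarith) hxξ₁ 3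
      have h3 := mul_le_mul_of_nonneg_left h2 (by linarith : (0:ℝ) ≤ ξ₁)
      have h4 : (0:ℝ) ≤ ξ₁ * x^3 :=
        mul_nonneg (by linarith) (le_of_lt (pow_pos (by linarith) 3))
      nlinarith [h1, h3, h4]
    · -- ξ₁ ≤ -1
      have hneg' : ξ₁ ≤ -1 := by linarith
      have hsub : S ⊆ {x ∈ Set.Ioo (2*ξ₁-1) (min (-(3+|β|)) (2*ξ₁+1)) | |g x - α| ≤ M} := by
        intro ξ hξ
        obtain ⟨h1, h2, h3⟩ := hξ
        rw [abs_lt] at h2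
        have hξneg : ξ < 0 := by
          rcases abs_cases ξ with ⟨he, _⟩ | ⟨he, _⟩
          · rw [he] at h1; linarith
          · rw [he] at h1; linarith
        rw [abs_of_neg hξneg] at h1
        exact ⟨⟨by linarith, lt_min (by linarith) (by linarith)⟩, h3⟩
      refine le_trans (measure_mono hsub) ?_
      apply vol_sublevel (convex_Ioo _ _) hdiff hm (by linarith)
      right
      intro x hx
      obtain ⟨hx1, hx2⟩ := hx
      have hxK : x < -(3 + |β|) := lt_of_lt_of_le hx2 (min_le_left _ _)
      have hxu : x < 2*ξ₁ + 1 := lt_of_lt_of_le hx2 (min_le_right _ _)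
      have hx3 : x < -3 := by linarith
      rw [hd x]
      have hP : 4*x^2 ≤ 5*((x-ξ₁)^2 + x^2) + 3*β := by
        nlinarith [sq_nonneg (x-ξ₁), neg_abs_le β]
      have hP0 : (0:ℝ) ≤ 5*((x-ξ₁)^2 + x^2) + 3*β := by nlinarith
      have hfac : -x ≤ ξ₁ - 2*x := by linarith
      have hstep : -(4*x^3) ≤ (ξ₁ - 2*x) * (5*((x-ξ₁)^2 + x^2) + 3*β) := by
        nlinarith [mul_nonneg (by linarith : (0:ℝ) ≤ ξ₁ - 2*x + x) hP0, sq_nonneg x]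
      have hxξ₁ : x ≤ ξ₁ := by linarith
      have h1 : ξ₁ * ((ξ₁-2*x) * (5*((x-ξ₁)^2 + x^2) + 3*β)) ≤ ξ₁ * (-(4*x^3)) :=
        mul_le_mul_of_nonpos_left hstep (by linarith)
      have h2 : (-ξ₁)^3 ≤ (-x)^3 := pow_le_pow_left₀ (by linarith) (by linarith) 3
      have h3 := mul_le_mul_of_nonneg_left h2 (by linarith : (0:ℝ) ≤ -ξ₁)
      have h4 : (0:ℝ) ≤ (-ξ₁) * (-x)^3 :=
        mul_nonneg (by linarith) (le_of_lt (pow_pos (by linarith) 3))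
      nlinarith [h1, h3, h4]
  -- combine
  have hpt : ∀ ξ ∈ S, ENNReal.ofReal (ξ^2) ≤ ENNReal.ofReal (9*ξ₁^2) := by
    intro ξ hξ
    exact ENNReal.ofReal_le_ofReal (hub ξ hξ).2
  calc (∫⁻ ξ in S, ENNReal.ofReal (ξ^2))
      ≤ ∫⁻ _ in S, ENNReal.ofReal (9*ξ₁^2) := setLIntegral_mono measurable_const hpt
    _ = ENNReal.ofReal (9*ξ₁^2) * volume S := setLIntegral_const _ _
    _ ≤ ENNReal.ofReal (9*ξ₁^2) * ENNReal.ofReal (4*M/ξ₁^4) := mul_le_mul_right hvol _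
    _ = ENNReal.ofReal (9*ξ₁^2 * (4*M/ξ₁^4)) := by
        rw [← ENNReal.ofReal_mul (by positivity)]
    _ ≤ ENNReal.ofReal (72*M) := by
        apply ENNReal.ofReal_le_ofReal
        have h1 : 9*ξ₁^2 * (4*M/ξ₁^4) = 36*M/ξ₁^2 := by
          field_simp [hz]
          ring
        rw [h1]
        have h2 : (1:ℝ) ≤ ξ₁^2 := by nlinarith [sq_abs ξ₁]
        calc 36*M/ξ₁^2 ≤ 36*M/1 := by
              apply div_le_div_of_nonneg_left (by linarith) (by norm_num) h2
          _ ≤ 72*M := by linarith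

lemma sq_add3 (p q r : ℝ≥0∞) : (p+q+r)^2 ≤ 4*p^2 + 4*q^2 + 4*r^2 := by
  calc (p+q+r)^2 ≤ 2*(p+q)^2 + 2*r^2 := sq_add_le _ _
    _ ≤ 2*(2*p^2+2*q^2) + 2*r^2 := by
        gcongr
        exact sq_add_le p q
    _ ≤ 4*p^2 + 4*q^2 + 4*r^2 := by
        rw [mul_add, ← mul_assoc, ← mul_assoc]
        norm_num
        apply add_le_add_right
        gcongr
        norm_num

lemma phi_cont (β α : ℝ) : Continuous fun p : ℝ×ℝ => |Phi β p.1 p.2 (p.1 - p.2) - α| := by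
  unfold Phi
  fun_prop

lemma core (β M α : ℝ) (hM : 1 ≤ M) (φ ψ : ℝ → ℝ≥0∞) (hφ : Measurable φ) (hψ : Measurable ψ) :
    ∫⁻ x : ℝ, (∫⁻ y : ℝ,
        (if |Phi β x y (x - y) - α| ≤ M then (1:ℝ≥0∞) else 0)
          * (ENNReal.ofReal |x| * (φ y * ψ (x - y))))^2
      ≤ ENNReal.ofReal ((8*(3+|β|)^3 + 608) * M)
          * ((∫⁻ y, (φ y)^2) * (∫⁻ y, (ψ y)^2)) := by
  classical
  set K := 3 + |β| with hKdef
  have hK3 : (3:ℝ) ≤ K := by linarith [abs_nonneg β]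
  set A := ∫⁻ y, (φ y)^2 with hA
  set B := ∫⁻ y, (ψ y)^2 with hB
  set e : ℝ → ℝ → ℝ≥0∞ := fun x y => if |Phi β x y (x - y) - α| ≤ M then (1:ℝ≥0∞) else 0 with he
  set v : ℝ → ℝ → ℝ≥0∞ := fun x y => e x y * (ENNReal.ofReal |x| * (φ y * ψ (x - y))) with hv
  set cA : ℝ → ℝ → ℝ≥0∞ := fun x _ => if |x| ≤ K then (1:ℝ≥0∞) else 0 with hcA
  set cB : ℝ → ℝ → ℝ≥0∞ := fun x y => if K < |x| ∧ 1 ≤ |2*y - x| then (1:ℝ≥0∞) else 0 with hcB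
  set cC : ℝ → ℝ → ℝ≥0∞ := fun x y => if K < |x| ∧ |2*y - x| < 1 then (1:ℝ≥0∞) else 0 with hcC
  -- measurability
  have hmeas_e : Measurable fun p : ℝ×ℝ => e p.1 p.2 := by
    apply Measurable.ite _ measurable_const measurable_const
    exact measurableSet_le (phi_cont β α).measurable measurable_const
  have hmeas_v : Measurable fun p : ℝ×ℝ => v p.1 p.2 := by
    apply hmeas_e.mul
    apply Measurable.mul
    · exact ENNReal.measurable_ofReal.comp (continuous_abs.measurable.comp measurable_fst)
    apply Measurable.mul
    · exact hφ.comp measurable_snd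
    · exact hψ.comp (measurable_fst.sub measurable_snd)
  have hmeas_cA : Measurable fun p : ℝ×ℝ => cA p.1 p.2 := by
    apply Measurable.ite _ measurable_const measurable_const
    exact measurableSet_le (continuous_abs.measurable.comp measurable_fst) measurable_const
  have hmeas_cB : Measurable fun p : ℝ×ℝ => cB p.1 p.2 := by
    apply Measurable.ite _ measurable_const measurable_const
    apply MeasurableSet.inter
    · exact measurableSet_lt measurable_const (continuous_abs.measurable.comp measurable_fst)
    · show MeasurableSet {p : ℝ×ℝ | (1:ℝ) ≤ |2*p.2 - p.1|}
      exact measurableSet_le measurable_const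
        (((measurable_snd.const_mul 2).sub measurable_fst).abs)
  have hmeas_cC : Measurable fun p : ℝ×ℝ => cC p.1 p.2 := by
    apply Measurable.ite _ measurable_const measurable_const
    apply MeasurableSet.inter
    · exact measurableSet_lt measurable_const (continuous_abs.measurable.comp measurable_fst)
    · show MeasurableSet {p : ℝ×ℝ | |2*p.2 - p.1| < 1}
      exact measurableSet_lt
        (((measurable_snd.const_mul 2).sub measurable_fst).abs) measurable_const
  have hsec : ∀ (F : ℝ×ℝ → ℝ≥0∞), Measurable F → ∀ x : ℝ, Measurable fun y => F (x, y) :=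
    fun F hF x => hF.comp measurable_prodMk_left
  -- splitting
  have hsplit : ∀ x y, v x y = cA x y * v x y + cB x y * v x y + cC x y * v x y := by
    intro x y
    by_cases h1 : |x| ≤ K
    · have h2 : ¬ (K < |x|) := not_lt.mpr h1
      simp [hcA, hcB, hcC, h1, h2]
    · push_neg at h1
      have h1' : ¬ (|x| ≤ K) := not_le.mpr h1
      by_cases h2 : 1 ≤ |2*y - x|
      · have h3 : ¬ (|2*y - x| < 1) := not_lt.mpr h2
        simp [hcA, hcB, hcC, h1, h1', h2, h3]
      · push_neg at h2
        have h2' : ¬ ((1:ℝ) ≤ |2*y - x|) := not_le.mpr h2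
        simp [hcA, hcB, hcC, h1, h1', h2, h2']

  -- basic pointwise facts
  have he1 : ∀ x y, e x y ≤ 1 := by
    intro x y; rw [he]; dsimp only; split <;> simp
  have hv_le : ∀ x y, v x y ≤ ENNReal.ofReal |x| * (φ y * ψ (x - y)) := by
    intro x y
    rw [hv]; dsimp only
    calc e x y * (ENNReal.ofReal |x| * (φ y * ψ (x - y)))
        ≤ 1 * (ENNReal.ofReal |x| * (φ y * ψ (x - y))) := mul_le_mul_left (he1 x y) _
      _ = ENNReal.ofReal |x| * (φ y * ψ (x - y)) := one_mul _
  -- decompose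
  have hmA : Measurable fun x : ℝ => ∫⁻ y, cA x y * v x y :=
    (hmeas_cA.mul hmeas_v).lintegral_prod_right'
  have hmB : Measurable fun x : ℝ => ∫⁻ y, cB x y * v x y :=
    (hmeas_cB.mul hmeas_v).lintegral_prod_right'
  have hmC : Measurable fun x : ℝ => ∫⁻ y, cC x y * v x y :=
    (hmeas_cC.mul hmeas_v).lintegral_prod_right'
  have hIv : ∀ x : ℝ, (∫⁻ y, v x y)
      = (∫⁻ y, cA x y * v x y) + (∫⁻ y, cB x y * v x y) + (∫⁻ y, cC x y * v x y) := by
    intro x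
    rw [lintegral_congr (hsplit x)]
    rw [lintegral_add_left ((hsec _ (hmeas_cA.fun_mul hmeas_v) x).fun_add (hsec _ (hmeas_cB.fun_mul hmeas_v) x)),
      lintegral_add_left (hsec _ (hmeas_cA.fun_mul hmeas_v) x)]
  have hT : (∫⁻ x, (∫⁻ y, v x y)^2)
      ≤ 4 * (∫⁻ x, (∫⁻ y, cA x y * v x y)^2) + 4 * (∫⁻ x, (∫⁻ y, cB x y * v x y)^2)
        + 4 * (∫⁻ x, (∫⁻ y, cC x y * v x y)^2) := by
    have step1 : (∫⁻ x, (∫⁻ y, v x y)^2)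
        ≤ ∫⁻ x, (4 * (∫⁻ y, cA x y * v x y)^2 + 4 * (∫⁻ y, cB x y * v x y)^2
            + 4 * (∫⁻ y, cC x y * v x y)^2) := by
      apply lintegral_mono
      intro x
      dsimp only
      rw [hIv x]
      exact sq_add3 _ _ _
    refine le_trans step1 (le_of_eq ?_)
    rw [lintegral_add_left (((hmA.pow_const 2).const_mul 4).fun_add ((hmB.pow_const 2).const_mul 4)),
      lintegral_add_left ((hmA.pow_const 2).const_mul 4),
      lintegral_const_mul 4 (hmA.pow_const 2),
      lintegral_const_mul 4 (hmB.pow_const 2),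
      lintegral_const_mul 4 (hmC.pow_const 2)]
  -- Region A
  have hAbound : (∫⁻ x, (∫⁻ y, cA x y * v x y)^2) ≤ ENNReal.ofReal (2*K^3) * (A*B) := by
    have hpt : ∀ x : ℝ, (∫⁻ y, cA x y * v x y)^2
        ≤ Set.indicator (Set.Icc (-K) K) (fun _ => ENNReal.ofReal (K^2) * (A*B)) x := by
      intro x
      by_cases hx : |x| ≤ K
      · have hxmem : x ∈ Set.Icc (-K) K := by rw [Set.mem_Icc, ← abs_le]; exact hx
        rw [Set.indicator_of_mem hxmem]
        have h1 : ∀ y, cA x y * v x y ≤ ENNReal.ofReal K * (φ y * ψ (x - y)) := by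
          intro y
          calc cA x y * v x y ≤ 1 * v x y := by
                apply mul_le_mul_left
                rw [hcA]; dsimp only; split <;> simp
            _ = v x y := one_mul _
            _ ≤ ENNReal.ofReal |x| * (φ y * ψ (x - y)) := hv_le x y
            _ ≤ ENNReal.ofReal K * (φ y * ψ (x - y)) :=
                mul_le_mul_left (ENNReal.ofReal_le_ofReal hx) _
        calc (∫⁻ y, cA x y * v x y)^2
            ≤ (∫⁻ y, ENNReal.ofReal K * (φ y * ψ (x - y)))^2 := by
              apply pow_le_pow_left' (lintegral_mono h1)
          _ = (ENNReal.ofReal K)^2 * (∫⁻ y, φ y * ψ (x - y))^2 := by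
              rw [lintegral_const_mul' _ _ ENNReal.ofReal_ne_top, mul_pow]
          _ ≤ ENNReal.ofReal (K^2) * (A*B) := by
              apply mul_le_mul'
              · rw [← ENNReal.ofReal_pow (by linarith : (0:ℝ) ≤ K)]
              · have hcs := lCS φ (fun y => ψ (x - y)) hφ
                  (hψ.comp (measurable_const.sub measurable_id))
                have htr : (∫⁻ y, (ψ (x - y))^2) = B :=
                  lintegral_sub_left (fun z => (ψ z)^2) x
                rw [htr] at hcs
                exact hcs
      · have hxmem : x ∉ Set.Icc (-K) K := by rw [Set.mem_Icc, ← abs_le]; exact hx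
        rw [Set.indicator_of_notMem hxmem]
        have hz : ∀ y : ℝ, cA x y * v x y = 0 := by
          intro y; rw [hcA]; dsimp only; rw [if_neg hx, zero_mul]
        rw [lintegral_congr hz]
        simp
    calc (∫⁻ x, (∫⁻ y, cA x y * v x y)^2)
        ≤ ∫⁻ x, Set.indicator (Set.Icc (-K) K) (fun _ => ENNReal.ofReal (K^2) * (A*B)) x :=
          lintegral_mono hpt
      _ = ENNReal.ofReal (K^2) * (A*B) * volume (Set.Icc (-K) K) := by
          rw [lintegral_indicator measurableSet_Icc, setLIntegral_const]
      _ = ENNReal.ofReal (2*K^3) * (A*B) := by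
          rw [Real.volume_Icc, show K - -K = 2*K by ring]
          rw [mul_comm (ENNReal.ofReal (K^2) * (A*B)) _, ← mul_assoc,
            ← ENNReal.ofReal_mul (by linarith : (0:ℝ) ≤ 2*K),
            show 2*K*K^2 = 2*K^3 by ring]

  -- Region B
  have hswapAB : (∫⁻ x : ℝ, ∫⁻ y : ℝ, (φ y)^2 * (ψ (x - y))^2) = A * B := by
    have hmp : Measurable (Function.uncurry fun x y : ℝ => (φ y)^2 * (ψ (x - y))^2) := by
      apply Measurable.mul
      · exact ((hφ.comp measurable_snd).pow_const 2)
      · exact ((hψ.comp (measurable_fst.sub measurable_snd)).pow_const 2)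
    rw [lintegral_lintegral_swap hmp.aemeasurable]
    have hinner : ∀ y : ℝ, (∫⁻ x, (φ y)^2 * (ψ (x - y))^2) = (φ y)^2 * B := by
      intro y
      have hm1 : Measurable fun x : ℝ => (ψ (x - y))^2 := by
        exact (hψ.comp (measurable_id.sub measurable_const)).pow_const 2
      rw [lintegral_const_mul _ hm1, lintegral_sub_right (fun z => (ψ z)^2) y]
    rw [lintegral_congr hinner, lintegral_mul_const _ (hφ.pow_const 2)]
  have hBbound : (∫⁻ x, (∫⁻ y, cB x y * v x y)^2) ≤ ENNReal.ofReal (8*M) * (A*B) := by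
    have hpt : ∀ x : ℝ, (∫⁻ y, cB x y * v x y)^2
        ≤ ENNReal.ofReal (8*M) * ∫⁻ y, (φ y)^2 * (ψ (x - y))^2 := by
      intro x
      by_cases hx : K < |x|
      · set u : ℝ → ℝ≥0∞ := fun y => cB x y * e x y with hu
        set SB := {y : ℝ | 1 ≤ |2*y - x| ∧ |Phi β x y (x - y) - α| ≤ M} with hSB
        have hu_meas : Measurable u := hsec _ (hmeas_cB.mul hmeas_e) x
        have hu_ind : ∀ y, u y = Set.indicator SB (fun _ => (1:ℝ≥0∞)) y := by
          intro y
          rw [hu, hcB, he]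
          dsimp only
          by_cases h1 : (1:ℝ) ≤ |2*y - x| <;> by_cases h2 : |Phi β x y (x - y) - α| ≤ M <;>
            simp [Set.indicator_apply, hSB, hx, h1, h2]
        have hSBmeas : MeasurableSet SB := by
          apply MeasurableSet.inter
          · exact measurableSet_le measurable_const
              (((measurable_id.const_mul 2).sub measurable_const).abs)
          · show MeasurableSet {y : ℝ | |Phi β x y (x - y) - α| ≤ M}
            exact measurableSet_le
              (((phi_cont β α).comp (Continuous.prodMk_right x)).measurable) measurable_const
        have hint_u : (∫⁻ y, (u y)^2) = volume SB := by
          have : ∀ y, (u y)^2 = Set.indicator SB (fun _ => (1:ℝ≥0∞)) y := by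
            intro y
            rw [pow_two, hu_ind y]
            by_cases hy : y ∈ SB <;> simp [hy]
          rw [lintegral_congr this, lintegral_indicator hSBmeas, setLIntegral_const, one_mul]
        have hw_eq : ∀ y, cB x y * v x y = u y * (cB x y * v x y) := by
          intro y
          rw [hu, hv, hcB, he]
          dsimp only
          by_cases h1 : K < |x| ∧ (1:ℝ) ≤ |2*y - x| <;>
            by_cases h2 : |Phi β x y (x - y) - α| ≤ M <;> simp [h1, h2]
        have hsq_le : ∀ y, (cB x y * v x y)^2
            ≤ ENNReal.ofReal (x^2) * ((φ y)^2 * (ψ (x - y))^2) := by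
          intro y
          have h1 : cB x y * v x y ≤ ENNReal.ofReal |x| * (φ y * ψ (x - y)) := by
            calc cB x y * v x y ≤ 1 * v x y := by
                  apply mul_le_mul_left
                  rw [hcB]; dsimp only; split <;> simp
              _ = v x y := one_mul _
              _ ≤ _ := hv_le x y
          calc (cB x y * v x y)^2 ≤ (ENNReal.ofReal |x| * (φ y * ψ (x - y)))^2 :=
                pow_le_pow_left' h1 2
            _ = ENNReal.ofReal (x^2) * ((φ y)^2 * (ψ (x - y))^2) := by
                rw [mul_pow, mul_pow, ← ENNReal.ofReal_pow (abs_nonneg x), sq_abs]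
        have hCS := lCS u (fun y => cB x y * v x y) hu_meas
          (hsec _ (hmeas_cB.mul hmeas_v) x)
        calc (∫⁻ y, cB x y * v x y)^2
            = (∫⁻ y, u y * (cB x y * v x y))^2 := by rw [← lintegral_congr hw_eq]
          _ ≤ (∫⁻ y, (u y)^2) * (∫⁻ y, (cB x y * v x y)^2) := hCS
          _ ≤ volume SB * (ENNReal.ofReal (x^2) * ∫⁻ y, (φ y)^2 * (ψ (x - y))^2) := by
              rw [hint_u]
              apply mul_le_mul' le_rfl
              rw [← lintegral_const_mul' _ _ ENNReal.ofReal_ne_top]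
              exact lintegral_mono hsq_le
          _ = (ENNReal.ofReal (x^2) * volume SB) * ∫⁻ y, (φ y)^2 * (ψ (x - y))^2 := by
              ring
          _ ≤ ENNReal.ofReal (8*M) * ∫⁻ y, (φ y)^2 * (ψ (x - y))^2 := by
              apply mul_le_mul' _ le_rfl
              exact measB β M α x hM (le_of_lt hx)
      · have hz : ∀ y : ℝ, cB x y * v x y = 0 := by
          intro y
          rw [hcB]; dsimp only
          rw [if_neg (fun h => hx h.1), zero_mul]
        rw [lintegral_congr hz]
        simp
    calc (∫⁻ x, (∫⁻ y, cB x y * v x y)^2)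
        ≤ ∫⁻ x, ENNReal.ofReal (8*M) * ∫⁻ y, (φ y)^2 * (ψ (x - y))^2 := lintegral_mono hpt
      _ = ENNReal.ofReal (8*M) * ∫⁻ x, ∫⁻ y, (φ y)^2 * (ψ (x - y))^2 :=
          lintegral_const_mul' _ _ ENNReal.ofReal_ne_top
      _ = ENNReal.ofReal (8*M) * (A*B) := by rw [hswapAB]

  -- Region C
  have hcC1 : ∀ x y, cC x y ≤ 1 := by
    intro x y; rw [hcC]; dsimp only; split <;> simp
  have hCbound : (∫⁻ x, (∫⁻ y, cC x y * v x y)^2) ≤ ENNReal.ofReal (144*M) * (A*B) := by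
    set Q : ℝ → ℝ≥0∞ := fun x => ∫⁻ y, (cC x y * e x y) * (φ y)^2 with hQ
    have hmQint : Measurable fun p : ℝ×ℝ => (cC p.1 p.2 * e p.1 p.2) * (φ p.2)^2 :=
      (hmeas_cC.mul hmeas_e).mul ((hφ.comp measurable_snd).pow_const 2)
    have hmQ : Measurable Q := hmQint.lintegral_prod_right'
    have hprod : ∀ x y y' : ℝ, (cC x y * v x y) * (cC x y' * v x y')
        ≤ ENNReal.ofReal (x^2) * ((cC x y * e x y) * ((φ y)^2 * (ψ (x - y'))^2))
          + ENNReal.ofReal (x^2) * ((cC x y' * e x y') * ((φ y')^2 * (ψ (x - y))^2)) := by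
      intro x y y'
      have hxx : ENNReal.ofReal |x| * ENNReal.ofReal |x| = ENNReal.ofReal (x^2) := by
        rw [← ENNReal.ofReal_mul (abs_nonneg x), ← sq_abs x, pow_two]
      have hc1 : cC x y * e x y ≤ 1 := by
        calc cC x y * e x y ≤ 1 * 1 := mul_le_mul' (hcC1 x y) (he1 x y)
          _ = 1 := one_mul 1
      have hc2 : cC x y' * e x y' ≤ 1 := by
        calc cC x y' * e x y' ≤ 1 * 1 := mul_le_mul' (hcC1 x y') (he1 x y')
          _ = 1 := one_mul 1
      rw [hv]; dsimp only
      calc (cC x y * (e x y * (ENNReal.ofReal |x| * (φ y * ψ (x - y)))))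
            * (cC x y' * (e x y' * (ENNReal.ofReal |x| * (φ y' * ψ (x - y')))))
          = ((cC x y * e x y) * (cC x y' * e x y')) * ((ENNReal.ofReal |x| * ENNReal.ofReal |x|)
              * ((φ y * ψ (x - y')) * (φ y' * ψ (x - y)))) := by ring
        _ = ((cC x y * e x y) * (cC x y' * e x y')) * (ENNReal.ofReal (x^2)
              * ((φ y * ψ (x - y')) * (φ y' * ψ (x - y)))) := by rw [hxx]
        _ ≤ ((cC x y * e x y) * (cC x y' * e x y')) * (ENNReal.ofReal (x^2)
              * ((φ y * ψ (x - y'))^2 + (φ y' * ψ (x - y))^2)) :=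
            mul_le_mul' le_rfl (mul_le_mul' le_rfl (mul_le_sq_add_sq _ _))
        _ = ENNReal.ofReal (x^2) * ((cC x y * e x y) * (cC x y' * e x y') * (φ y * ψ (x - y'))^2)
              + ENNReal.ofReal (x^2) * ((cC x y * e x y) * (cC x y' * e x y') * (φ y' * ψ (x - y))^2) := by
            ring
        _ ≤ _ := by
            apply add_le_add
            · apply mul_le_mul' le_rfl
              calc (cC x y * e x y) * (cC x y' * e x y') * (φ y * ψ (x - y'))^2
                  ≤ (cC x y * e x y) * 1 * (φ y * ψ (x - y'))^2 :=
                    mul_le_mul' (mul_le_mul' le_rfl hc2) le_rfl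
                _ = (cC x y * e x y) * ((φ y)^2 * (ψ (x - y'))^2) := by
                    rw [mul_one, mul_pow]
            · apply mul_le_mul' le_rfl
              calc (cC x y * e x y) * (cC x y' * e x y') * (φ y' * ψ (x - y))^2
                  ≤ 1 * (cC x y' * e x y') * (φ y' * ψ (x - y))^2 :=
                    mul_le_mul' (mul_le_mul' hc1 le_rfl) le_rfl
                _ = (cC x y' * e x y') * ((φ y')^2 * (ψ (x - y))^2) := by
                    rw [one_mul, mul_pow]
    have hQbound : ∀ x : ℝ, (∫⁻ y, cC x y * v x y)^2
        ≤ 2 * (ENNReal.ofReal (x^2) * Q x * B) := by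
      intro x
      have hu_meas : Measurable fun y => cC x y * v x y := hsec _ (hmeas_cC.mul hmeas_v) x
      have hexp : (∫⁻ y, cC x y * v x y)^2
          = ∫⁻ y, ∫⁻ y', (cC x y * v x y) * (cC x y' * v x y') := by
        rw [pow_two, ← lintegral_mul_const _ hu_meas]
        apply lintegral_congr
        intro y
        rw [← lintegral_const_mul _ hu_meas]
      have hmT1 : ∀ y, Measurable fun y' : ℝ =>
          ENNReal.ofReal (x^2) * ((cC x y * e x y) * ((φ y)^2 * (ψ (x - y'))^2)) := by
        intro y
        apply Measurable.const_mul
        apply Measurable.const_mul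
        exact ((hψ.comp (measurable_const.sub measurable_id)).pow_const 2).const_mul _
      have hstep : ∀ y : ℝ, (∫⁻ y', (cC x y * v x y) * (cC x y' * v x y'))
          ≤ ENNReal.ofReal (x^2) * ((cC x y * e x y) * (φ y)^2) * B
            + ENNReal.ofReal (x^2) * ((ψ (x - y))^2 * Q x) := by
        intro y
        have hterm1 : (∫⁻ y', ENNReal.ofReal (x^2) * ((cC x y * e x y) * ((φ y)^2 * (ψ (x - y'))^2)))
            = ENNReal.ofReal (x^2) * ((cC x y * e x y) * (φ y)^2) * B := by
          have hcg : ∀ y' : ℝ, ENNReal.ofReal (x^2) * ((cC x y * e x y) * ((φ y)^2 * (ψ (x - y'))^2))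
              = (ENNReal.ofReal (x^2) * ((cC x y * e x y) * (φ y)^2)) * (ψ (x - y'))^2 := by
            intro y'; ring
          have hm2 : Measurable fun y' : ℝ => (ψ (x - y'))^2 := by
            exact (hψ.comp (measurable_const.sub measurable_id)).pow_const 2
          rw [lintegral_congr hcg, lintegral_const_mul _ hm2,
            lintegral_sub_left (fun z => (ψ z)^2) x]
        have hterm2 : (∫⁻ y', ENNReal.ofReal (x^2) * ((cC x y' * e x y') * ((φ y')^2 * (ψ (x - y))^2)))
            = ENNReal.ofReal (x^2) * ((ψ (x - y))^2 * Q x) := by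
          have hcg : ∀ y' : ℝ, ENNReal.ofReal (x^2) * ((cC x y' * e x y') * ((φ y')^2 * (ψ (x - y))^2))
              = (ENNReal.ofReal (x^2) * (ψ (x - y))^2) * ((cC x y' * e x y') * (φ y')^2) := by
            intro y'; ring
          rw [lintegral_congr hcg, lintegral_const_mul _ (hsec _ hmQint x)]
          ring
        calc (∫⁻ y', (cC x y * v x y) * (cC x y' * v x y'))
            ≤ ∫⁻ y', (ENNReal.ofReal (x^2) * ((cC x y * e x y) * ((φ y)^2 * (ψ (x - y'))^2))
                + ENNReal.ofReal (x^2) * ((cC x y' * e x y') * ((φ y')^2 * (ψ (x - y))^2))) :=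
              lintegral_mono (fun y' => hprod x y y')
          _ = (∫⁻ y', ENNReal.ofReal (x^2) * ((cC x y * e x y) * ((φ y)^2 * (ψ (x - y'))^2)))
              + (∫⁻ y', ENNReal.ofReal (x^2) * ((cC x y' * e x y') * ((φ y')^2 * (ψ (x - y))^2))) :=
              lintegral_add_left (hmT1 y) _
          _ = ENNReal.ofReal (x^2) * ((cC x y * e x y) * (φ y)^2) * B
              + ENNReal.ofReal (x^2) * ((ψ (x - y))^2 * Q x) := by rw [hterm1, hterm2]
      have hmS1 : Measurable fun y : ℝ => ENNReal.ofReal (x^2) * ((cC x y * e x y) * (φ y)^2) * B := by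
        apply Measurable.mul_const
        exact (hsec _ hmQint x).const_mul _
      have hsum1 : (∫⁻ y, ENNReal.ofReal (x^2) * ((cC x y * e x y) * (φ y)^2) * B)
          = ENNReal.ofReal (x^2) * Q x * B := by
        rw [lintegral_mul_const _ ((hsec _ hmQint x).const_mul _),
          lintegral_const_mul' _ _ ENNReal.ofReal_ne_top]
      have hsum2 : (∫⁻ y, ENNReal.ofReal (x^2) * ((ψ (x - y))^2 * Q x))
          = ENNReal.ofReal (x^2) * (B * Q x) := by
        have hm2 : Measurable fun y : ℝ => (ψ (x - y))^2 := by
          exact (hψ.comp (measurable_const.sub measurable_id)).pow_const 2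
        rw [lintegral_const_mul' _ _ ENNReal.ofReal_ne_top,
          lintegral_mul_const _ hm2, lintegral_sub_left (fun z => (ψ z)^2) x]
      calc (∫⁻ y, cC x y * v x y)^2
          = ∫⁻ y, ∫⁻ y', (cC x y * v x y) * (cC x y' * v x y') := hexp
        _ ≤ ∫⁻ y, (ENNReal.ofReal (x^2) * ((cC x y * e x y) * (φ y)^2) * B
              + ENNReal.ofReal (x^2) * ((ψ (x - y))^2 * Q x)) := lintegral_mono hstep
        _ = (∫⁻ y, ENNReal.ofReal (x^2) * ((cC x y * e x y) * (φ y)^2) * B)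
            + (∫⁻ y, ENNReal.ofReal (x^2) * ((ψ (x - y))^2 * Q x)) := lintegral_add_left hmS1 _
        _ = ENNReal.ofReal (x^2) * Q x * B + ENNReal.ofReal (x^2) * (B * Q x) := by
            rw [hsum1, hsum2]
        _ = 2 * (ENNReal.ofReal (x^2) * Q x * B) := by ring
    have hQint_bound : (∫⁻ x, ENNReal.ofReal (x^2) * Q x) ≤ ENNReal.ofReal (72*M) * A := by
      have hrw : ∀ x : ℝ, ENNReal.ofReal (x^2) * Q x
          = ∫⁻ y, ENNReal.ofReal (x^2) * ((cC x y * e x y) * (φ y)^2) :=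
        fun x => (lintegral_const_mul' _ _ ENNReal.ofReal_ne_top).symm
      rw [lintegral_congr hrw]
      have hmfull : Measurable (Function.uncurry fun x y : ℝ =>
          ENNReal.ofReal (x^2) * ((cC x y * e x y) * (φ y)^2)) := by
        apply Measurable.mul
        · exact ENNReal.measurable_ofReal.comp ((measurable_fst.pow_const 2))
        · exact hmQint
      rw [lintegral_lintegral_swap hmfull.aemeasurable]
      have hin : ∀ y : ℝ, (∫⁻ x, ENNReal.ofReal (x^2) * ((cC x y * e x y) * (φ y)^2))
          ≤ ENNReal.ofReal (72*M) * (φ y)^2 := by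
        intro y
        have h1 : ∀ x : ℝ, ENNReal.ofReal (x^2) * ((cC x y * e x y) * (φ y)^2)
            = (ENNReal.ofReal (x^2) * (cC x y * e x y)) * (φ y)^2 := by intro x; ring
        have hmx : Measurable fun x : ℝ => ENNReal.ofReal (x^2) * (cC x y * e x y) := by
          apply Measurable.mul
          · exact ENNReal.measurable_ofReal.comp (measurable_id.pow_const 2)
          · exact ((hmeas_cC.mul hmeas_e).comp (measurable_prodMk_right))
        rw [lintegral_congr h1, lintegral_mul_const _ hmx]
        apply mul_le_mul' _ le_rfl
        have hSCmeas : MeasurableSet {ξ : ℝ | 3 + |β| < |ξ|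
            ∧ |2*y - ξ| < 1 ∧ |Phi β ξ y (ξ - y) - α| ≤ M} := by
          apply MeasurableSet.inter
          · exact measurableSet_lt measurable_const continuous_abs.measurable
          apply MeasurableSet.inter
          · show MeasurableSet {ξ : ℝ | |2*y - ξ| < 1}
            exact measurableSet_lt ((measurable_const.sub measurable_id).abs) measurable_const
          · show MeasurableSet {ξ : ℝ | |Phi β ξ y (ξ - y) - α| ≤ M}
            exact measurableSet_le
              (((phi_cont β α).comp (continuous_id.prodMk continuous_const)).measurable)
              measurable_const
        have hind : (fun x => ENNReal.ofReal (x^2) * (cC x y * e x y))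
            = Set.indicator {ξ : ℝ | 3 + |β| < |ξ| ∧ |2*y - ξ| < 1
                ∧ |Phi β ξ y (ξ - y) - α| ≤ M} (fun ξ => ENNReal.ofReal (ξ^2)) := by
          funext x
          rw [hcC, he]; dsimp only
          by_cases h1 : K < |x| ∧ |2*y - x| < 1 <;>
            by_cases h2 : |Phi β x y (x - y) - α| ≤ M <;>
            · rw [hKdef] at h1
              simp [Set.indicator_apply, hKdef, h1, h2]
              try tauto
        rw [hind, lintegral_indicator hSCmeas]
        exact measC β M α hM y
      calc (∫⁻ y, ∫⁻ x, ENNReal.ofReal (x^2) * ((cC x y * e x y) * (φ y)^2))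
          ≤ ∫⁻ y, ENNReal.ofReal (72*M) * (φ y)^2 := lintegral_mono hin
        _ = ENNReal.ofReal (72*M) * A := lintegral_const_mul' _ _ ENNReal.ofReal_ne_top
    have hmxQ : Measurable fun x : ℝ => ENNReal.ofReal (x^2) * Q x :=
      (ENNReal.measurable_ofReal.comp (measurable_id.pow_const 2)).mul hmQ
    calc (∫⁻ x, (∫⁻ y, cC x y * v x y)^2)
        ≤ ∫⁻ x, 2 * (ENNReal.ofReal (x^2) * Q x * B) := lintegral_mono hQbound
      _ = 2 * ∫⁻ x, ENNReal.ofReal (x^2) * Q x * B :=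
          lintegral_const_mul' _ _ ENNReal.ofNat_ne_top
      _ = 2 * ((∫⁻ x, ENNReal.ofReal (x^2) * Q x) * B) := by
          rw [lintegral_mul_const _ hmxQ]
      _ ≤ 2 * ((ENNReal.ofReal (72*M) * A) * B) :=
          mul_le_mul' le_rfl (mul_le_mul' hQint_bound le_rfl)
      _ = ENNReal.ofReal (144*M) * (A*B) := by
          rw [show (2:ℝ≥0∞) * ((ENNReal.ofReal (72*M) * A) * B)
              = ((2:ℝ≥0∞) * ENNReal.ofReal (72*M)) * (A*B) from by ring,
            show (2:ℝ≥0∞) = ENNReal.ofReal 2 from by norm_num,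
            ← ENNReal.ofReal_mul (by norm_num : (0:ℝ) ≤ 2),
            show (2:ℝ)*(72*M) = 144*M from by ring]
  -- combine
  refine le_trans hT ?_
  have hK0 : (0:ℝ) < K := by linarith
  have hfinal : 4 * (ENNReal.ofReal (2*K^3) * (A*B)) + 4 * (ENNReal.ofReal (8*M) * (A*B))
      + 4 * (ENNReal.ofReal (144*M) * (A*B)) ≤ ENNReal.ofReal ((8*K^3 + 608) * M) * (A*B) := by
    have hstep : (4:ℝ≥0∞) * ENNReal.ofReal (2*K^3) + 4 * ENNReal.ofReal (8*M)
        + 4 * ENNReal.ofReal (144*M) ≤ ENNReal.ofReal ((8*K^3 + 608) * M) := by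
      rw [show (4:ℝ≥0∞) = ENNReal.ofReal 4 from by norm_num,
        ← ENNReal.ofReal_mul (by norm_num : (0:ℝ) ≤ 4),
        ← ENNReal.ofReal_mul (by norm_num : (0:ℝ) ≤ 4),
        ← ENNReal.ofReal_mul (by norm_num : (0:ℝ) ≤ 4),
        ← ENNReal.ofReal_add (by positivity) (by positivity),
        ← ENNReal.ofReal_add (by positivity) (by positivity)]
      apply ENNReal.ofReal_le_ofReal
      nlinarith [pow_pos hK0 3, mul_nonneg (by linarith : (0:ℝ) ≤ M - 1)
        (le_of_lt (pow_pos hK0 3))]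
    calc 4 * (ENNReal.ofReal (2*K^3) * (A*B)) + 4 * (ENNReal.ofReal (8*M) * (A*B))
        + 4 * (ENNReal.ofReal (144*M) * (A*B))
        = (4 * ENNReal.ofReal (2*K^3) + 4 * ENNReal.ofReal (8*M)
            + 4 * ENNReal.ofReal (144*M)) * (A*B) := by ring
      _ ≤ ENNReal.ofReal ((8*K^3 + 608) * M) * (A*B) := mul_le_mul' hstep le_rfl
  exact le_trans (add_le_add (add_le_add (mul_le_mul' le_rfl hAbound)
    (mul_le_mul' le_rfl hBbound)) (mul_le_mul' le_rfl hCbound)) hfinal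

lemma phi_cont0 (β : ℝ) : Continuous fun p : ℝ×ℝ => Phi β p.1 p.2 (p.1 - p.2) := by
  unfold Phi; fun_prop


/-- Estimate (nm) of Proposition 3.1: `‖N^α_{≤M}(f,g)‖_{H^s} ≲ M^{1/2} ‖f‖_{H^s} ‖g‖_{H^s}`
for `s ≥ 0` (stated on the Fourier side). -/
theorem kawahara_N_leM_estimate (s β : ℝ) (hs : 0 ≤ s) :
    ∃ C > 0, ∀ (t α M : ℝ), 1 ≤ M → ∀ f g : ℝ → ℂ,
      Measurable f → Measurable g →
      Integrable (fun ξ : ℝ => (1 + ξ ^ 2) ^ s * ‖f ξ‖ ^ 2) →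
      Integrable (fun ξ : ℝ => (1 + ξ ^ 2) ^ s * ‖g ξ‖ ^ 2) →
      wnorm s (fun ξ : ℝ => ∫ ξ₁ : ℝ,
          if |Phi β ξ ξ₁ (ξ - ξ₁) - α| ≤ M then
            Complex.I * (ξ : ℂ) * Complex.exp (Complex.I * (t : ℂ) * ((Phi β ξ ξ₁ (ξ - ξ₁) : ℝ) : ℂ))
              * f ξ₁ * g (ξ - ξ₁)
          else 0)
        ≤ C * M ^ ((1 : ℝ) / 2) * wnorm s f * wnorm s g := by
  classical
  have hβ0 : (0:ℝ) ≤ |β| := abs_nonneg β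
  set c : ℝ := 2^s * (8*(3+|β|)^3 + 608) with hc
  have hcpos : 0 < c := by positivity
  refine ⟨Real.sqrt c, Real.sqrt_pos.mpr hcpos, ?_⟩
  intro t α M hM f g hf hg hif hig
  have hM0 : (0:ℝ) < M := by linarith
  -- weights
  set w2 : ℝ → ℝ := fun x => (1+x^2)^(s/2) with hw2
  have hw2pos : ∀ x : ℝ, 0 < w2 x := fun x => Real.rpow_pos_of_pos (by positivity) _
  have hw2cont : Continuous w2 := by
    apply Continuous.rpow_const (continuous_const.fun_add (continuous_pow 2))
    intro x; left; positivity
  have hwcont : Continuous fun x : ℝ => (1+x^2)^s := by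
    apply Continuous.rpow_const (continuous_const.fun_add (continuous_pow 2))
    intro x; left; positivity
  set φ : ℝ → ℝ≥0∞ := fun x => ENNReal.ofReal (w2 x) * (‖f x‖₊ : ℝ≥0∞) with hφdef
  set ψ : ℝ → ℝ≥0∞ := fun x => ENNReal.ofReal (w2 x) * (‖g x‖₊ : ℝ≥0∞) with hψdef
  have hφm : Measurable φ := (ENNReal.measurable_ofReal.comp hw2cont.measurable).mul hf.nnnorm.coe_nnreal_ennreal
  have hψm : Measurable ψ := (ENNReal.measurable_ofReal.comp hw2cont.measurable).mul hg.nnnorm.coe_nnreal_ennreal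
  have hw2sq : ∀ x : ℝ, w2 x * w2 x = (1+x^2)^s := by
    intro x
    rw [hw2]; dsimp only
    rw [← Real.rpow_add (by positivity : (0:ℝ) < 1+x^2)]
    norm_num
  have hφsq : ∀ x : ℝ, (φ x)^2 = ENNReal.ofReal ((1+x^2)^s * ‖f x‖^2) := by
    intro x
    rw [hφdef]; dsimp only
    rw [mul_pow, ← ENNReal.ofReal_pow (le_of_lt (hw2pos x)), ← ofReal_norm_eq_coe_nnnorm,
      ← ENNReal.ofReal_pow (norm_nonneg _), ← ENNReal.ofReal_mul (by positivity)]
    congr 1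
    rw [pow_two, hw2sq x]
  have hψsq : ∀ x : ℝ, (ψ x)^2 = ENNReal.ofReal ((1+x^2)^s * ‖g x‖^2) := by
    intro x
    rw [hψdef]; dsimp only
    rw [mul_pow, ← ENNReal.ofReal_pow (le_of_lt (hw2pos x)), ← ofReal_norm_eq_coe_nnnorm,
      ← ENNReal.ofReal_pow (norm_nonneg _), ← ENNReal.ofReal_mul (by positivity)]
    congr 1
    rw [pow_two, hw2sq x]
  set If := ∫ x : ℝ, (1+x^2)^s * ‖f x‖^2 with hIfdef
  set Ig := ∫ x : ℝ, (1+x^2)^s * ‖g x‖^2 with hIgdef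
  have hIf0 : 0 ≤ If := integral_nonneg (fun x => by positivity)
  have hIg0 : 0 ≤ Ig := integral_nonneg (fun x => by positivity)
  have hAeq : (∫⁻ x, (φ x)^2) = ENNReal.ofReal If := by
    rw [lintegral_congr hφsq, hIfdef,
      ← MeasureTheory.ofReal_integral_eq_lintegral_ofReal hif
        (ae_of_all _ (fun x => by positivity))]
  have hBeq : (∫⁻ x, (ψ x)^2) = ENNReal.ofReal Ig := by
    rw [lintegral_congr hψsq, hIgdef,
      ← MeasureTheory.ofReal_integral_eq_lintegral_ofReal hig
        (ae_of_all _ (fun x => by positivity))]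
  -- kernel
  set Ker : ℝ × ℝ → ℂ := fun p =>
    if |Phi β p.1 p.2 (p.1 - p.2) - α| ≤ M then
      Complex.I * (p.1 : ℂ)
        * Complex.exp (Complex.I * (t : ℂ) * ((Phi β p.1 p.2 (p.1 - p.2) : ℝ) : ℂ))
        * f p.2 * g (p.1 - p.2)
    else 0 with hKer
  have hKer_meas : Measurable Ker := by
    apply Measurable.ite
    · exact measurableSet_le (phi_cont β α).measurable measurable_const
    · exact ((((measurable_const.mul (Complex.measurable_ofReal.comp measurable_fst)).mul
        (Complex.continuous_exp.measurable.comp (measurable_const.mul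
          (Complex.measurable_ofReal.comp (phi_cont0 β).measurable)))).mul
        (hf.comp measurable_snd)).mul (hg.comp (measurable_fst.sub measurable_snd)))
    · exact measurable_const
  have hF_sm : StronglyMeasurable fun x : ℝ => ∫ y, Ker (x, y) :=
    hKer_meas.stronglyMeasurable.integral_prod_right'
  -- norm of the kernel
  have hexp1 : ∀ z : ℝ, ‖Complex.exp (Complex.I * (t:ℂ) * (z:ℂ))‖ = 1 := by
    intro z
    rw [Complex.norm_exp]
    have : (Complex.I * (t:ℂ) * (z:ℂ)).re = 0 := by simp
    rw [this, Real.exp_zero]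
  have hKer_norm : ∀ x y : ℝ, (‖Ker (x,y)‖₊ : ℝ≥0∞)
      = (if |Phi β x y (x - y) - α| ≤ M then (1:ℝ≥0∞) else 0)
        * (ENNReal.ofReal |x| * ((‖f y‖₊ : ℝ≥0∞) * (‖g (x-y)‖₊ : ℝ≥0∞))) := by
    intro x y
    rw [hKer]; dsimp only
    by_cases hcond : |Phi β x y (x - y) - α| ≤ M
    · rw [if_pos hcond, if_pos hcond, one_mul]
      have hn : ‖Complex.I * (x:ℂ)
          * Complex.exp (Complex.I * (t:ℂ) * ((Phi β x y (x - y) : ℝ) : ℂ)) * f y * g (x-y)‖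
          = |x| * (‖f y‖ * ‖g (x-y)‖) := by
        rw [norm_mul, norm_mul, norm_mul, norm_mul, Complex.norm_I, one_mul, hexp1, mul_one,
          Complex.norm_real, Real.norm_eq_abs]
        ring
      rw [← ofReal_norm_eq_coe_nnnorm, hn, ENNReal.ofReal_mul (abs_nonneg x),
        ENNReal.ofReal_mul (norm_nonneg _), ofReal_norm_eq_coe_nnnorm,
        ofReal_norm_eq_coe_nnnorm]
    · rw [if_neg hcond, if_neg hcond, zero_mul]
      simp
  -- weight comparison
  have hwt : ∀ x y : ℝ, ENNReal.ofReal (w2 x)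
      ≤ ENNReal.ofReal (2^(s/2)) * (ENNReal.ofReal (w2 y) * ENNReal.ofReal (w2 (x-y))) := by
    intro x y
    rw [← ENNReal.ofReal_mul (le_of_lt (hw2pos y)), ← ENNReal.ofReal_mul (by positivity)]
    apply ENNReal.ofReal_le_ofReal
    rw [hw2]; dsimp only
    have hbase : 1+x^2 ≤ 2*((1+y^2)*(1+(x-y)^2)) := by
      nlinarith [sq_nonneg (y - (x-y)), sq_nonneg (y*(x-y))]
    calc (1+x^2)^(s/2) ≤ (2*((1+y^2)*(1+(x-y)^2)))^(s/2) :=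
          Real.rpow_le_rpow (by positivity) hbase (by linarith)
      _ = 2^(s/2) * ((1+y^2)^(s/2) * (1+(x-y)^2)^(s/2)) := by
          rw [Real.mul_rpow (by norm_num) (by positivity),
            Real.mul_rpow (by positivity) (by positivity)]
  -- KEY estimate
  have hKEY : (∫⁻ x : ℝ, ENNReal.ofReal ((1+x^2)^s) * (‖∫ y, Ker (x,y)‖₊ : ℝ≥0∞)^2)
      ≤ ENNReal.ofReal (2^s) * (ENNReal.ofReal ((8*(3+|β|)^3 + 608) * M)
          * ((∫⁻ y, (φ y)^2) * (∫⁻ y, (ψ y)^2))) := by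
    have hpt : ∀ x : ℝ, ENNReal.ofReal ((1+x^2)^s) * (‖∫ y, Ker (x,y)‖₊ : ℝ≥0∞)^2
        ≤ ENNReal.ofReal (2^s)
          * (∫⁻ y, (if |Phi β x y (x - y) - α| ≤ M then (1:ℝ≥0∞) else 0)
              * (ENNReal.ofReal |x| * (φ y * ψ (x-y))))^2 := by
      intro x
      have h1 : ENNReal.ofReal ((1+x^2)^s)
          = ENNReal.ofReal (w2 x) * ENNReal.ofReal (w2 x) := by
        rw [← ENNReal.ofReal_mul (le_of_lt (hw2pos x)), hw2sq]
      have h3 : ENNReal.ofReal (w2 x) * (‖∫ y, Ker (x,y)‖₊ : ℝ≥0∞)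
          ≤ ENNReal.ofReal (2^(s/2))
            * ∫⁻ y, (if |Phi β x y (x - y) - α| ≤ M then (1:ℝ≥0∞) else 0)
                * (ENNReal.ofReal |x| * (φ y * ψ (x-y))) := by
        calc ENNReal.ofReal (w2 x) * (‖∫ y, Ker (x,y)‖₊ : ℝ≥0∞)
            ≤ ENNReal.ofReal (w2 x) * ∫⁻ y, (‖Ker (x,y)‖₊ : ℝ≥0∞) :=
              mul_le_mul' le_rfl (enorm_integral_le_lintegral_enorm _)
          _ = ∫⁻ y, ENNReal.ofReal (w2 x) * (‖Ker (x,y)‖₊ : ℝ≥0∞) :=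
              (lintegral_const_mul' _ _ ENNReal.ofReal_ne_top).symm
          _ ≤ ∫⁻ y, ENNReal.ofReal (2^(s/2))
              * ((if |Phi β x y (x - y) - α| ≤ M then (1:ℝ≥0∞) else 0)
                * (ENNReal.ofReal |x| * (φ y * ψ (x-y)))) := by
              apply lintegral_mono
              intro y
              dsimp only
              rw [hKer_norm x y]
              calc ENNReal.ofReal (w2 x)
                  * ((if |Phi β x y (x - y) - α| ≤ M then (1:ℝ≥0∞) else 0)
                    * (ENNReal.ofReal |x| * ((‖f y‖₊ : ℝ≥0∞) * (‖g (x-y)‖₊ : ℝ≥0∞))))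
                  ≤ (ENNReal.ofReal (2^(s/2))
                      * (ENNReal.ofReal (w2 y) * ENNReal.ofReal (w2 (x-y))))
                    * ((if |Phi β x y (x - y) - α| ≤ M then (1:ℝ≥0∞) else 0)
                      * (ENNReal.ofReal |x| * ((‖f y‖₊ : ℝ≥0∞) * (‖g (x-y)‖₊ : ℝ≥0∞)))) :=
                    mul_le_mul' (hwt x y) le_rfl
                _ = ENNReal.ofReal (2^(s/2))
                    * ((if |Phi β x y (x - y) - α| ≤ M then (1:ℝ≥0∞) else 0)
                      * (ENNReal.ofReal |x| * (φ y * ψ (x-y)))) := by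
                    rw [hφdef, hψdef]; dsimp only; ring
          _ = ENNReal.ofReal (2^(s/2))
              * ∫⁻ y, (if |Phi β x y (x - y) - α| ≤ M then (1:ℝ≥0∞) else 0)
                * (ENNReal.ofReal |x| * (φ y * ψ (x-y))) :=
              lintegral_const_mul' _ _ ENNReal.ofReal_ne_top
      calc ENNReal.ofReal ((1+x^2)^s) * (‖∫ y, Ker (x,y)‖₊ : ℝ≥0∞)^2
          = (ENNReal.ofReal (w2 x) * (‖∫ y, Ker (x,y)‖₊ : ℝ≥0∞))^2 := by
            rw [h1]; ring
        _ ≤ (ENNReal.ofReal (2^(s/2))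
            * ∫⁻ y, (if |Phi β x y (x - y) - α| ≤ M then (1:ℝ≥0∞) else 0)
                * (ENNReal.ofReal |x| * (φ y * ψ (x-y))))^2 := pow_le_pow_left' h3 2
        _ = ENNReal.ofReal (2^s)
            * (∫⁻ y, (if |Phi β x y (x - y) - α| ≤ M then (1:ℝ≥0∞) else 0)
                * (ENNReal.ofReal |x| * (φ y * ψ (x-y))))^2 := by
            rw [mul_pow, ← ENNReal.ofReal_pow (by positivity)]
            congr 2
            rw [pow_two, ← Real.rpow_add (by norm_num : (0:ℝ) < 2)]
            norm_num
    calc (∫⁻ x : ℝ, ENNReal.ofReal ((1+x^2)^s) * (‖∫ y, Ker (x,y)‖₊ : ℝ≥0∞)^2)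
        ≤ ∫⁻ x : ℝ, ENNReal.ofReal (2^s)
            * (∫⁻ y, (if |Phi β x y (x - y) - α| ≤ M then (1:ℝ≥0∞) else 0)
                * (ENNReal.ofReal |x| * (φ y * ψ (x-y))))^2 := lintegral_mono hpt
      _ = ENNReal.ofReal (2^s)
          * ∫⁻ x : ℝ, (∫⁻ y, (if |Phi β x y (x - y) - α| ≤ M then (1:ℝ≥0∞) else 0)
              * (ENNReal.ofReal |x| * (φ y * ψ (x-y))))^2 :=
          lintegral_const_mul' _ _ ENNReal.ofReal_ne_top
      _ ≤ ENNReal.ofReal (2^s) * (ENNReal.ofReal ((8*(3+|β|)^3 + 608) * M)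
          * ((∫⁻ y, (φ y)^2) * (∫⁻ y, (ψ y)^2))) :=
          mul_le_mul' le_rfl (core β M α hM φ ψ hφm hψm)
  -- rewrite RHS of hKEY
  have hRHS : ENNReal.ofReal (2^s) * (ENNReal.ofReal ((8*(3+|β|)^3 + 608) * M)
      * ((∫⁻ y, (φ y)^2) * (∫⁻ y, (ψ y)^2))) = ENNReal.ofReal (c * M * If * Ig) := by
    rw [hAeq, hBeq,
      ← ENNReal.ofReal_mul (hIf0),
      ← ENNReal.ofReal_mul (by positivity : (0:ℝ) ≤ (8*(3+|β|)^3 + 608) * M),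
      ← ENNReal.ofReal_mul (by positivity : (0:ℝ) ≤ (2:ℝ)^s)]
    congr 1
    rw [hc]; ring
  rw [hRHS] at hKEY
  -- wnorm of F
  show wnorm s (fun x : ℝ => ∫ y : ℝ, Ker (x, y)) ≤ _
  have hintmeas : AEStronglyMeasurable
      (fun x : ℝ => (1+x^2)^s * ‖∫ y, Ker (x,y)‖^2) volume :=
    (hwcont.measurable.mul ((hF_sm.measurable.norm).pow_const 2)).aestronglyMeasurable
  have hwF : wnorm s (fun x : ℝ => ∫ y : ℝ, Ker (x, y))
      = ((∫⁻ x : ℝ, ENNReal.ofReal ((1+x^2)^s)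
          * (‖∫ y, Ker (x,y)‖₊ : ℝ≥0∞)^2).toReal)^((1:ℝ)/2) := by
    rw [wnorm]
    congr 2
    rw [integral_eq_lintegral_of_nonneg_ae (ae_of_all _ fun x => by positivity) hintmeas]
    congr 1
    apply lintegral_congr
    intro x
    rw [ENNReal.ofReal_mul (by positivity), ← ofReal_norm_eq_coe_nnnorm,
      ← ENNReal.ofReal_pow (norm_nonneg _)]
  rw [hwF]
  have hle : (∫⁻ x : ℝ, ENNReal.ofReal ((1+x^2)^s)
      * (‖∫ y, Ker (x,y)‖₊ : ℝ≥0∞)^2).toReal ≤ c * M * If * Ig := by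
    apply ENNReal.toReal_le_of_le_ofReal (by positivity)
    exact hKEY
  have hwf : wnorm s f = If ^ ((1:ℝ)/2) := rfl
  have hwg : wnorm s g = Ig ^ ((1:ℝ)/2) := rfl
  rw [hwf, hwg]
  calc ((∫⁻ x : ℝ, ENNReal.ofReal ((1+x^2)^s)
      * (‖∫ y, Ker (x,y)‖₊ : ℝ≥0∞)^2).toReal)^((1:ℝ)/2)
      ≤ (c * M * If * Ig)^((1:ℝ)/2) :=
        Real.rpow_le_rpow ENNReal.toReal_nonneg hle (by norm_num)
    _ = Real.sqrt c * M ^ ((1:ℝ)/2) * If ^ ((1:ℝ)/2) * Ig ^ ((1:ℝ)/2) := by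
        rw [Real.mul_rpow (by positivity) hIg0,
          Real.mul_rpow (by positivity) hIf0,
          Real.mul_rpow (le_of_lt hcpos) (le_of_lt hM0),
          Real.sqrt_eq_rpow]
end

section
/- Let s ≥ 0. There exists C > 0 (depending only on s) such that for all measurable f, g : ℝ → ℂ with ‖f‖_{L²_s}, ‖g‖_{L²_s} < ∞, one has sup_{ξ ∈ ℝ} |ξ|^s · | ∫_ℝ f(ξ₁) · g(ξ − ξ₁) dξ₁ | ≤ C · ‖f‖_{L²_s} ‖g‖_{L²_s}. -/
open MeasureTheory

lemma sq_eq_weight (s : ℝ) (f : ℝ → ℂ) (x : ℝ) :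
    ((1 + x ^ 2) ^ (s / 2) * ‖f x‖) ^ 2 = (1 + x ^ 2) ^ s * ‖f x‖ ^ 2 := by
  have h1 : (0:ℝ) ≤ 1 + x ^ 2 := by positivity
  rw [mul_pow, ← Real.rpow_natCast ((1 + x ^ 2) ^ (s / 2)) 2, ← Real.rpow_mul h1]
  norm_num

lemma key_ptwise (s : ℝ) (hs : 0 ≤ s) (ξ x : ℝ) :
    |ξ| ^ s ≤ (2:ℝ) ^ (s / 2) * ((1 + x ^ 2) ^ (s / 2) * (1 + (ξ - x) ^ 2) ^ (s / 2)) := by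
  have h1 : (0:ℝ) ≤ 1 + x ^ 2 := by positivity
  have h2 : (0:ℝ) ≤ 1 + (ξ - x) ^ 2 := by positivity
  have hb : ξ ^ 2 ≤ 2 * ((1 + x ^ 2) * (1 + (ξ - x) ^ 2)) := by nlinarith [sq_nonneg (x - (ξ - x)), sq_nonneg (x * (ξ - x))]
  have : |ξ| ^ s = (ξ ^ 2) ^ (s / 2) := by
    rw [show (ξ:ℝ)^2 = |ξ|^2 by rw [sq_abs], ← Real.rpow_natCast (|ξ|) 2,
      ← Real.rpow_mul (abs_nonneg ξ)]
    congr 1; ring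
  rw [this, ← Real.mul_rpow (by positivity) (by positivity),
    ← Real.mul_rpow (by positivity : (0:ℝ) ≤ 2) (by positivity)]
  exact Real.rpow_le_rpow (sq_nonneg ξ) hb (by positivity)

/-- Bilinear estimate (hs-hs): for `s ≥ 0`,
`sup_ξ |ξ|^s |∫ f(ξ₁) g(ξ−ξ₁) dξ₁| ≲ ‖f‖_{L²_s} ‖g‖_{L²_s}`. -/
theorem convolution_sup_estimate (s : ℝ) (hs : 0 ≤ s) :
    ∃ C > 0, ∀ f g : ℝ → ℂ,
      Measurable f → Measurable g →
      Integrable (fun ξ : ℝ => (1 + ξ ^ 2) ^ s * ‖f ξ‖ ^ 2) →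
      Integrable (fun ξ : ℝ => (1 + ξ ^ 2) ^ s * ‖g ξ‖ ^ 2) →
      ∀ ξ : ℝ, |ξ| ^ s * ‖∫ ξ₁ : ℝ, f ξ₁ * g (ξ - ξ₁)‖ ≤ C * wnorm s f * wnorm s g := by
  refine ⟨(2:ℝ) ^ (s / 2), by positivity, ?_⟩
  intro f g hf hg hfi hgi ξ
  set F : ℝ → ℝ := fun x => (1 + x ^ 2) ^ (s / 2) * ‖f x‖ with hFdef
  set G : ℝ → ℝ := fun x => (1 + (ξ - x) ^ 2) ^ (s / 2) * ‖g (ξ - x)‖ with hGdef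
  have hFmeas : Measurable F := by
    apply Measurable.mul
    · exact ((continuous_const.add (continuous_id.pow 2)).rpow_const
        (fun x => Or.inr (by positivity))).measurable
    · exact hf.norm
  have hGmeas : Measurable G := by
    have hm : Measurable fun x : ℝ => ξ - x := measurable_const.sub measurable_id
    apply Measurable.mul
    · exact ((continuous_const.add ((continuous_const.sub continuous_id).pow 2)).rpow_const
        (fun x => Or.inr (by positivity))).measurable
    · exact hg.norm.comp hm
  have hFsq : Integrable (fun x => F x ^ 2) := by
    simpa only [hFdef, sq_eq_weight] using hfi
  have hGsq : Integrable (fun x => G x ^ 2) := by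
    have h1 : Integrable (fun x => (1 + x ^ 2) ^ s * ‖g x‖ ^ 2) := hgi
    have h2 : Integrable (fun x : ℝ => (1 + (ξ - x) ^ 2) ^ s * ‖g (ξ - x)‖ ^ 2) :=
      h1.comp_sub_left ξ
    simpa only [hGdef, sq_eq_weight] using h2
  have hF2 : MemLp F 2 := by
    rw [memLp_two_iff_integrable_sq hFmeas.aestronglyMeasurable]
    exact hFsq
  have hG2 : MemLp G 2 := by
    rw [memLp_two_iff_integrable_sq hGmeas.aestronglyMeasurable]
    exact hGsq
  have hFG : Integrable (fun x => F x * G x) := by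
    apply Integrable.mono' ((hFsq.add hGsq).div_const 2)
      ((hFmeas.mul hGmeas).aestronglyMeasurable)
    filter_upwards with x
    have h1 : (0:ℝ) ≤ F x := by positivity
    have h2 : (0:ℝ) ≤ G x := by positivity
    simp only [Pi.add_apply, Pi.mul_apply]
    rw [Real.norm_of_nonneg (mul_nonneg h1 h2)]
    nlinarith [sq_nonneg (F x - G x)]
  -- step 1: norm of integral
  have step1 : ‖∫ ξ₁ : ℝ, f ξ₁ * g (ξ - ξ₁)‖ ≤ ∫ ξ₁ : ℝ, ‖f ξ₁‖ * ‖g (ξ - ξ₁)‖ := by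
    calc ‖∫ ξ₁ : ℝ, f ξ₁ * g (ξ - ξ₁)‖ ≤ ∫ ξ₁ : ℝ, ‖f ξ₁ * g (ξ - ξ₁)‖ :=
          norm_integral_le_integral_norm _
      _ = ∫ ξ₁ : ℝ, ‖f ξ₁‖ * ‖g (ξ - ξ₁)‖ := by simp [norm_mul]
  have habs : 0 ≤ |ξ| ^ s := by positivity
  have step2 : |ξ| ^ s * ∫ ξ₁ : ℝ, ‖f ξ₁‖ * ‖g (ξ - ξ₁)‖
      ≤ (2:ℝ) ^ (s / 2) * ∫ x : ℝ, F x * G x := by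
    rw [← integral_const_mul, ← integral_const_mul]
    apply integral_mono_of_nonneg
    · filter_upwards with x; positivity
    · exact hFG.const_mul _
    · filter_upwards with x
      have hk := key_ptwise s hs ξ x
      have hfg : (0:ℝ) ≤ ‖f x‖ * ‖g (ξ - x)‖ := by positivity
      calc |ξ| ^ s * (‖f x‖ * ‖g (ξ - x)‖)
          ≤ ((2:ℝ) ^ (s / 2) * ((1 + x ^ 2) ^ (s / 2) * (1 + (ξ - x) ^ 2) ^ (s / 2)))
              * (‖f x‖ * ‖g (ξ - x)‖) := mul_le_mul_of_nonneg_right hk hfg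
        _ = (2:ℝ) ^ (s / 2) * (F x * G x) := by simp only [hFdef, hGdef]; ring
  -- Cauchy–Schwarz
  have hCS : ∫ x, F x * G x ≤ (∫ x, F x ^ (2:ℝ)) ^ ((1:ℝ)/2) * (∫ x, G x ^ (2:ℝ)) ^ ((1:ℝ)/2) := by
    have hconj : Real.HolderConjugate 2 2 := by constructor <;> norm_num
    have := integral_mul_le_Lp_mul_Lq_of_nonneg (μ := volume) hconj
      (f := F) (g := G) (Filter.Eventually.of_forall fun x => by positivity)
      (Filter.Eventually.of_forall fun x => by positivity) (by simpa using hF2) (by simpa using hG2)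
    simpa using this
  have hrw : ∀ h : ℝ → ℝ, (fun x => h x ^ (2:ℝ)) = fun x => h x ^ (2:ℕ) := by
    intro h; funext x; rw [← Real.rpow_natCast (h x) 2]; norm_num
  have hFn : (∫ x, F x ^ (2:ℝ)) ^ ((1:ℝ)/2) = wnorm s f := by
    rw [hrw F]
    unfold wnorm
    congr 1
    apply integral_congr_ae
    filter_upwards with x
    exact sq_eq_weight s f x
  have hGn : (∫ x, G x ^ (2:ℝ)) ^ ((1:ℝ)/2) = wnorm s g := by
    rw [hrw G]
    unfold wnorm
    congr 1
    have : (fun x : ℝ => G x ^ (2:ℕ)) = fun x : ℝ => (1 + (ξ - x) ^ 2) ^ s * ‖g (ξ - x)‖ ^ 2 := by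
      funext x; exact sq_eq_weight s g (ξ - x)
    rw [this]
    exact integral_sub_left_eq_self (fun y : ℝ => (1 + y ^ 2) ^ s * ‖g y‖ ^ 2) volume ξ
  have h2pos : (0:ℝ) < (2:ℝ) ^ (s/2) := by positivity
  calc |ξ| ^ s * ‖∫ ξ₁ : ℝ, f ξ₁ * g (ξ - ξ₁)‖
      ≤ |ξ| ^ s * ∫ ξ₁ : ℝ, ‖f ξ₁‖ * ‖g (ξ - ξ₁)‖ := mul_le_mul_of_nonneg_left step1 habs
    _ ≤ (2:ℝ) ^ (s / 2) * ∫ x : ℝ, F x * G x := step2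
    _ ≤ (2:ℝ) ^ (s / 2) * ((∫ x, F x ^ (2:ℝ)) ^ ((1:ℝ)/2) * (∫ x, G x ^ (2:ℝ)) ^ ((1:ℝ)/2)) :=
        mul_le_mul_of_nonneg_left hCS h2pos.le
    _ = (2:ℝ) ^ (s / 2) * wnorm s f * wnorm s g := by rw [hFn, hGn]; ring
end

section
/- For every β ∈ ℝ there exist ε ∈ (0, 1), K ≥ 1, and C > 0 (depending only on β) such that for all α ∈ ℝ, all M ≥ 1, and all ξ ∈ ℝ with |ξ| ≥ K, the Lebesgue measure of the set { ξ₁ ∈ ℝ : max(|ξ − ξ₁|, 1) ≤ ε|ξ| and |Φ_β(ξ, ξ₁, ξ − ξ₁) − α| ≤ M } is at most C · M / ξ⁴. -/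
open MeasureTheory

/-- Derivative of the fiber map `t ↦ Φ(ξ, t, ξ - t) - ξ⁴ t`. -/
lemma kawahara_hasDerivAt (β ξ t : ℝ) :
    HasDerivAt (fun s => Phi β ξ s (ξ - s) - ξ ^ 4 * s)
      (5 * t ^ 4 - 5 * (ξ - t) ^ 4 + β * (3 * t ^ 2 - 3 * (ξ - t) ^ 2) - ξ ^ 4) t := by
  have h1 : HasDerivAt (fun s : ℝ => ξ - s) (-1) t := by
    simpa using (hasDerivAt_id t).const_sub ξ
  have hA : HasDerivAt (fun s : ℝ => s ^ 5 + (ξ - s) ^ 5 - ξ ^ 5)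
      ((5 : ℕ) * t ^ 4 + (5 : ℕ) * (ξ - t) ^ 4 * (-1)) t :=
    ((hasDerivAt_pow 5 t).add (h1.pow 5)).sub_const (ξ ^ 5)
  have hB : HasDerivAt (fun s : ℝ => β * (s ^ 3 + (ξ - s) ^ 3 - ξ ^ 3))
      (β * ((3 : ℕ) * t ^ 2 + (3 : ℕ) * (ξ - t) ^ 2 * (-1))) t :=
    (((hasDerivAt_pow 3 t).add (h1.pow 3)).sub_const (ξ ^ 3)).const_mul β
  have hC : HasDerivAt (fun s : ℝ => ξ ^ 4 * s) (ξ ^ 4 * 1) t :=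
    (hasDerivAt_id t).const_mul (ξ ^ 4)
  have h := (hA.add hB).sub hC
  have heq : (5 : ℝ) * t ^ 4 - 5 * (ξ - t) ^ 4 + β * (3 * t ^ 2 - 3 * (ξ - t) ^ 2) - ξ ^ 4
      = ((5 : ℕ) * t ^ 4 + (5 : ℕ) * (ξ - t) ^ 4 * (-1)
          + β * ((3 : ℕ) * t ^ 2 + (3 : ℕ) * (ξ - t) ^ 2 * (-1))) - ξ ^ 4 * 1 := by
    push_cast; ring
  rw [heq]
  exact h

/-- Key algebraic inequality (in terms of `u = ξ - t`). -/
lemma kawahara_helper (β ξ u : ℝ) (hβ : 6 * |β| ≤ ξ ^ 2) (hu : |u| ≤ |ξ| / 4) :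
    ξ ^ 4 ≤ 5 * (ξ - u) ^ 4 - 5 * u ^ 4 + β * (3 * (ξ - u) ^ 2 - 3 * u ^ 2) := by
  have hu2 : u ^ 2 ≤ ξ ^ 2 / 16 := by
    have h1 : |u| ^ 2 ≤ (|ξ| / 4) ^ 2 := pow_le_pow_left₀ (abs_nonneg _) hu 2
    rw [div_pow, sq_abs, sq_abs] at h1
    nlinarith [h1]
  have hβ1 : β ≤ |β| := le_abs_self β
  have hβ2 : -|β| ≤ β := neg_abs_le β
  have h1 : ξ ^ 2 / 2 ≤ (ξ - u) ^ 2 - u ^ 2 := by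
    nlinarith [sq_nonneg (ξ - 4 * u), sq_nonneg (ξ + 4 * u)]
  have h2 : 2 * ξ ^ 2 ≤ 5 * ((ξ - u) ^ 2 + u ^ 2) + 3 * β := by
    nlinarith [sq_nonneg (ξ - 4 * u), sq_nonneg (ξ + 4 * u)]
  have h3 : ξ ^ 2 / 2 * (2 * ξ ^ 2)
      ≤ ((ξ - u) ^ 2 - u ^ 2) * (5 * ((ξ - u) ^ 2 + u ^ 2) + 3 * β) :=
    mul_le_mul h1 h2 (by nlinarith [sq_nonneg ξ]) (by nlinarith)
  nlinarith [h3]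

/-- The derivative is at least `ξ⁴` on the relevant interval. -/
lemma kawahara_deriv_lower (β ξ t : ℝ) (hβ : 6 * |β| ≤ ξ ^ 2)
    (ht : |ξ - t| ≤ |ξ| / 4) :
    ξ ^ 4 ≤ 5 * t ^ 4 - 5 * (ξ - t) ^ 4 + β * (3 * t ^ 2 - 3 * (ξ - t) ^ 2) := by
  have h := kawahara_helper β ξ (ξ - t) hβ ht
  have heq : (5 : ℝ) * (ξ - (ξ - t)) ^ 4 - 5 * (ξ - t) ^ 4
      + β * (3 * (ξ - (ξ - t)) ^ 2 - 3 * (ξ - t) ^ 2)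
      = 5 * t ^ 4 - 5 * (ξ - t) ^ 4 + β * (3 * t ^ 2 - 3 * (ξ - t) ^ 2) := by ring
  linarith [heq ▸ h]

/-- Sublevel-set measure bound in the regime `max{|ξ₂|, 1} ≪ |ξ|`: for `|ξ|` large, the set of
`ξ₁` with `max(|ξ − ξ₁|, 1) ≤ ε|ξ|` and `|Φ_β(ξ, ξ₁, ξ − ξ₁) − α| ≤ M` has measure `≲ M/ξ⁴`. -/
theorem kawahara_sublevel_measure_case2 (β : ℝ) :
    ∃ ε ∈ Set.Ioo (0 : ℝ) 1, ∃ K : ℝ, 1 ≤ K ∧ ∃ C > 0,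
      ∀ (α M ξ : ℝ), 1 ≤ M → K ≤ |ξ| →
        (volume {ξ₁ : ℝ | max |ξ - ξ₁| 1 ≤ ε * |ξ| ∧ |Phi β ξ ξ₁ (ξ - ξ₁) - α| ≤ M}).toReal
          ≤ C * M / ξ ^ 4 := by
  refine ⟨1/4, ⟨by norm_num, by norm_num⟩, 1 + 3 * |β|,
    by linarith [abs_nonneg β], 2, by norm_num, ?_⟩
  intro α M ξ hM hK
  set S := {ξ₁ : ℝ | max |ξ - ξ₁| 1 ≤ 1/4 * |ξ| ∧ |Phi β ξ ξ₁ (ξ - ξ₁) - α| ≤ M} with hS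
  have hξ1 : (1 : ℝ) ≤ |ξ| := le_trans (by linarith [abs_nonneg β]) hK
  have hξ0 : ξ ≠ 0 := by
    intro h
    rw [h, abs_zero] at hξ1
    linarith
  have hξ4 : (0 : ℝ) < ξ ^ 4 := by positivity
  have hβξ : 6 * |β| ≤ ξ ^ 2 := by
    have h2 : (1 + 3 * |β|) ^ 2 ≤ |ξ| ^ 2 := pow_le_pow_left₀ (by positivity) hK 2
    have h3 : |ξ| ^ 2 = ξ ^ 2 := sq_abs ξ
    nlinarith [abs_nonneg β, sq_nonneg (|β|)]
  set D := Set.Icc (ξ - |ξ| / 4) (ξ + |ξ| / 4) with hD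
  set g := fun s => Phi β ξ s (ξ - s) - ξ ^ 4 * s with hg
  have hmono : MonotoneOn g D := by
    apply monotoneOn_of_deriv_nonneg (convex_Icc _ _)
    · exact fun x _ => (kawahara_hasDerivAt β ξ x).differentiableAt.continuousAt.continuousWithinAt
    · exact fun x _ => (kawahara_hasDerivAt β ξ x).differentiableAt.differentiableWithinAt
    · intro x hx
      rw [interior_Icc] at hx
      rw [(kawahara_hasDerivAt β ξ x).deriv]
      have habs : |ξ - x| ≤ |ξ| / 4 := by
        rw [abs_sub_le_iff]
        constructor <;> linarith [hx.1, hx.2]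
      linarith [kawahara_deriv_lower β ξ x hβξ habs]
  have hSD : ∀ x ∈ S, x ∈ D := by
    intro x hx
    have h1 : |ξ - x| ≤ 1/4 * |ξ| := le_trans (le_max_left _ _) hx.1
    rw [abs_sub_le_iff] at h1
    exact ⟨by linarith [h1.1], by linarith [h1.2]⟩
  have hdist : ∀ x ∈ S, ∀ y ∈ S, dist x y ≤ 2 * M / ξ ^ 4 := by
    have key : ∀ x ∈ S, ∀ y ∈ S, x ≤ y → y - x ≤ 2 * M / ξ ^ 4 := by
      intro x hx y hy hxy
      have hgle : g x ≤ g y := hmono (hSD x hx) (hSD y hy) hxy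
      have hfx := hx.2
      have hfy := hy.2
      rw [abs_le] at hfx hfy
      have h1 : ξ ^ 4 * (y - x) ≤ 2 * M := by
        simp only [hg] at hgle
        nlinarith [hfx.1, hfx.2, hfy.1, hfy.2]
      rw [le_div_iff₀ hξ4]
      nlinarith [h1]
    intro x hx y hy
    rcases le_total x y with h | h
    · rw [dist_comm, Real.dist_eq, abs_of_nonneg (by linarith : (0:ℝ) ≤ y - x)]
      exact key x hx y hy h
    · rw [Real.dist_eq, abs_of_nonneg (by linarith : (0:ℝ) ≤ x - y)]
      exact key y hy x hx h
  have hMpos : (0 : ℝ) ≤ 2 * M / ξ ^ 4 := by positivity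
  have hdiam : EMetric.diam S ≤ ENNReal.ofReal (2 * M / ξ ^ 4) := by
    apply EMetric.diam_le
    intro x hx y hy
    rw [edist_dist]
    exact ENNReal.ofReal_le_ofReal (hdist x hx y hy)
  have hvol : volume S ≤ ENNReal.ofReal (2 * M / ξ ^ 4) :=
    le_trans (Real.volume_le_diam S) hdiam
  exact ENNReal.toReal_le_of_le_ofReal hMpos hvol
end

section
/- For every β ∈ ℝ there exist c ∈ (0, 1), K ≥ 1, and C > 0 (depending only on β) such that for all α ∈ ℝ, all M ≥ 1, and all ξ₂ ∈ ℝ with |ξ₂| ≥ K, the Lebesgue measure of the set { ξ₁ ∈ ℝ : c|ξ₂| ≤ |ξ₁| ≤ |ξ₂|/c, |ξ₁ + ξ₂| ≥ K, |2ξ₁ + ξ₂| ≥ (3/2)|ξ₁ + ξ₂|, and |Φ_β(ξ₁ + ξ₂, ξ₁, ξ₂) − α| ≤ M } is at most C · M / |ξ₂|³. -/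
open MeasureTheory
set_option maxHeartbeats 1000000

private lemma phi_hasDeriv (β ξ₂ t : ℝ) :
    HasDerivAt (fun s : ℝ => Phi β (s + ξ₂) s ξ₂)
      (-(ξ₂ * (2 * t + ξ₂) * (10 * t ^ 2 + 10 * t * ξ₂ + 5 * ξ₂ ^ 2 + 3 * β))) t := by
  have h1 : HasDerivAt (fun s : ℝ => s ^ 5) ((5 : ℕ) * t ^ 4 * 1) t := by
    simpa using hasDerivAt_pow 5 t
  have h2 : HasDerivAt (fun s : ℝ => (s + ξ₂) ^ 5) ((5 : ℕ) * (t + ξ₂) ^ 4 * 1) t :=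
    ((hasDerivAt_id t).add_const ξ₂).pow 5
  have h3 : HasDerivAt (fun s : ℝ => s ^ 3) ((3 : ℕ) * t ^ 2 * 1) t := by
    simpa using hasDerivAt_pow 3 t
  have h4 : HasDerivAt (fun s : ℝ => (s + ξ₂) ^ 3) ((3 : ℕ) * (t + ξ₂) ^ 2 * 1) t :=
    ((hasDerivAt_id t).add_const ξ₂).pow 3
  have h := ((h1.add_const (ξ₂ ^ 5)).sub h2).add
    (((h3.add_const (ξ₂ ^ 3)).sub h4).const_mul β)
  convert h using 1
  · rfl
  · rfl
  · funext s; simp only [Phi, Pi.add_apply, Pi.sub_apply]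
  push_cast
  ring

/-- Sublevel-set measure bound in the regime `1 ≪ |ξ| ≲ |ξ₁| ∼ |ξ₂|`: for `|ξ₂|` large, the set
of `ξ₁` with `c|ξ₂| ≤ |ξ₁| ≤ |ξ₂|/c`, `|ξ₁ + ξ₂| ≥ K`, `|2ξ₁ + ξ₂| ≥ (3/2)|ξ₁ + ξ₂|`, and
`|Φ_β(ξ₁ + ξ₂, ξ₁, ξ₂) − α| ≤ M` has measure `≲ M/|ξ₂|³`. -/
theorem kawahara_sublevel_measure_case3 (β : ℝ) :
    ∃ c ∈ Set.Ioo (0 : ℝ) 1, ∃ K : ℝ, 1 ≤ K ∧ ∃ C > 0,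
      ∀ (α M ξ₂ : ℝ), 1 ≤ M → K ≤ |ξ₂| →
        (volume {ξ₁ : ℝ | c * |ξ₂| ≤ |ξ₁| ∧ |ξ₁| ≤ |ξ₂| / c ∧ K ≤ |ξ₁ + ξ₂| ∧
            (3 / 2) * |ξ₁ + ξ₂| ≤ |2 * ξ₁ + ξ₂| ∧
            |Phi β (ξ₁ + ξ₂) ξ₁ ξ₂ - α| ≤ M}).toReal
          ≤ C * M / |ξ₂| ^ 3 := by
  refine ⟨1/2, ⟨by norm_num, by norm_num⟩, 6 * |β| + 1,
    by nlinarith [abs_nonneg β], 3, by norm_num, ?_⟩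
  intro α M ξ₂ hM hK
  have hβ0 : (0 : ℝ) ≤ |β| := abs_nonneg β
  have hξ1 : (1 : ℝ) ≤ |ξ₂| := by linarith
  have hξsq : ξ₂ ^ 2 = |ξ₂| ^ 2 := (sq_abs ξ₂).symm
  have hξsq1 : (1 : ℝ) ≤ ξ₂ ^ 2 := by nlinarith
  have hβξ : 6 * |β| ≤ ξ₂ ^ 2 := by nlinarith
  have hM0 : (0 : ℝ) < M := by linarith
  have hD : (0 : ℝ) < |ξ₂| ^ 3 := by positivity
  set S : Set ℝ := {ξ₁ : ℝ | 1/2 * |ξ₂| ≤ |ξ₁| ∧ |ξ₁| ≤ |ξ₂| / (1/2) ∧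
      6 * |β| + 1 ≤ |ξ₁ + ξ₂| ∧ (3 / 2) * |ξ₁ + ξ₂| ≤ |2 * ξ₁ + ξ₂| ∧
      |Phi β (ξ₁ + ξ₂) ξ₁ ξ₂ - α| ≤ M} with hS
  set L : ℝ := 2 * M / (3 * |ξ₂| ^ 3) with hLdef
  have hL0 : 0 ≤ L := by positivity
  -- key diameter bound on each side of -ξ₂/2
  have key : ∀ x ∈ S, ∀ y ∈ S, x ≤ y → (0 ≤ 2 * x + ξ₂ ∨ 2 * y + ξ₂ ≤ 0) → y - x ≤ L := by
    intro x hx y hy hxy hside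
    rcases eq_or_lt_of_le hxy with rfl | hlt
    · simpa using hL0
    obtain ⟨hx1, hx2, hx3, hx4, hx5⟩ := hx
    obtain ⟨hy1, hy2, hy3, hy4, hy5⟩ := hy
    set f : ℝ → ℝ := fun s => Phi β (s + ξ₂) s ξ₂ with hf
    obtain ⟨c, hc, hceq⟩ := exists_hasDerivAt_eq_slope f
      (fun t => -(ξ₂ * (2 * t + ξ₂) * (10 * t ^ 2 + 10 * t * ξ₂ + 5 * ξ₂ ^ 2 + 3 * β))) hlt
      (fun t _ => (phi_hasDeriv β ξ₂ t).continuousAt.continuousWithinAt)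
      (fun t _ => phi_hasDeriv β ξ₂ t)
    have hdiff : |f y - f x| ≤ 2 * M := by
      have h1 := abs_sub_le (f y) α (f x)
      rw [abs_sub_comm α (f x)] at h1
      linarith
    have hgc : 2 * ξ₂ ^ 2 ≤ 10 * c ^ 2 + 10 * c * ξ₂ + 5 * ξ₂ ^ 2 + 3 * β := by
      nlinarith [sq_nonneg (2 * c + ξ₂), neg_abs_le β]
    have hgc0 : 0 < 10 * c ^ 2 + 10 * c * ξ₂ + 5 * ξ₂ ^ 2 + 3 * β := by nlinarith
    have h32 : (3 : ℝ) / 2 ≤ |2 * c + ξ₂| := by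
      rcases hside with h | h
      · have hx32 : (3 : ℝ) / 2 ≤ |2 * x + ξ₂| := by nlinarith
        have : (3 : ℝ) / 2 ≤ 2 * c + ξ₂ := by
          rw [abs_of_nonneg h] at hx32
          have := hc.1
          linarith
        exact this.trans (le_abs_self _)
      · have hy32 : (3 : ℝ) / 2 ≤ |2 * y + ξ₂| := by nlinarith
        have : (3 : ℝ) / 2 ≤ -(2 * c + ξ₂) := by
          rw [abs_of_nonpos h] at hy32
          have := hc.2
          linarith
        exact this.trans (neg_le_abs _)
    have hderiv_lb : 3 * |ξ₂| ^ 3 ≤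
        |(-(ξ₂ * (2 * c + ξ₂) * (10 * c ^ 2 + 10 * c * ξ₂ + 5 * ξ₂ ^ 2 + 3 * β)))| := by
      rw [abs_neg, abs_mul, abs_mul, abs_of_pos hgc0]
      calc 3 * |ξ₂| ^ 3 = |ξ₂| * (3 / 2) * (2 * |ξ₂| ^ 2) := by ring
        _ = |ξ₂| * (3 / 2) * (2 * ξ₂ ^ 2) := by rw [← hξsq]
        _ ≤ |ξ₂| * |2 * c + ξ₂| * (10 * c ^ 2 + 10 * c * ξ₂ + 5 * ξ₂ ^ 2 + 3 * β) := by
            gcongr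
    have hslope : |f y - f x| = |(-(ξ₂ * (2 * c + ξ₂) *
        (10 * c ^ 2 + 10 * c * ξ₂ + 5 * ξ₂ ^ 2 + 3 * β)))| * (y - x) := by
      rw [hceq, abs_div, abs_of_pos (by linarith : (0:ℝ) < y - x), div_mul_cancel₀ _ (sub_ne_zero.mpr hlt.ne')]
    have hfinal : 3 * |ξ₂| ^ 3 * (y - x) ≤ 2 * M := by
      calc 3 * |ξ₂| ^ 3 * (y - x)
          ≤ |(-(ξ₂ * (2 * c + ξ₂) * (10 * c ^ 2 + 10 * c * ξ₂ + 5 * ξ₂ ^ 2 + 3 * β)))| *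
            (y - x) := by gcongr
        _ = |f y - f x| := hslope.symm
        _ ≤ 2 * M := hdiff
    rw [hLdef, le_div_iff₀ (by positivity)]
    linarith
  -- split S into the two sides and bound each piece by an interval of length 2L
  have interval_bound : ∀ (T : Set ℝ), T ⊆ S →
      (∀ x ∈ T, ∀ y ∈ T, x ≤ y → y - x ≤ L) → volume T ≤ ENNReal.ofReal (2 * L) := by
    intro T hTS hdiam
    rcases T.eq_empty_or_nonempty with he | ⟨a, ha⟩
    · simp [he]
    have hsub : T ⊆ Set.Icc (a - L) (a + L) := by
      intro t ht
      constructor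
      · rcases le_total t a with h | h
        · have := hdiam t ht a ha h; linarith
        · linarith
      · rcases le_total a t with h | h
        · have := hdiam a ha t ht h; linarith
        · linarith
    calc volume T ≤ volume (Set.Icc (a - L) (a + L)) := measure_mono hsub
      _ = ENNReal.ofReal (2 * L) := by rw [Real.volume_Icc]; congr 1; ring
  set S₁ : Set ℝ := S ∩ {t | 0 ≤ 2 * t + ξ₂} with hS₁
  set S₂ : Set ℝ := S ∩ {t | 2 * t + ξ₂ ≤ 0} with hS₂
  have hb1 : volume S₁ ≤ ENNReal.ofReal (2 * L) :=
    interval_bound S₁ Set.inter_subset_left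
      (fun x hx y hy hxy => key x hx.1 y hy.1 hxy (Or.inl hx.2))
  have hb2 : volume S₂ ≤ ENNReal.ofReal (2 * L) :=
    interval_bound S₂ Set.inter_subset_left
      (fun x hx y hy hxy => key x hx.1 y hy.1 hxy (Or.inr hy.2))
  have hcover : S ⊆ S₁ ∪ S₂ := by
    intro t ht
    rcases le_total 0 (2 * t + ξ₂) with h | h
    · exact Or.inl ⟨ht, h⟩
    · exact Or.inr ⟨ht, h⟩
  have hvol : volume S ≤ ENNReal.ofReal (3 * M / |ξ₂| ^ 3) := by
    calc volume S ≤ volume (S₁ ∪ S₂) := measure_mono hcover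
      _ ≤ volume S₁ + volume S₂ := measure_union_le _ _
      _ ≤ ENNReal.ofReal (2 * L) + ENNReal.ofReal (2 * L) := add_le_add hb1 hb2
      _ = ENNReal.ofReal (2 * L + 2 * L) := (ENNReal.ofReal_add (by positivity) (by positivity)).symm
      _ ≤ ENNReal.ofReal (3 * M / |ξ₂| ^ 3) := by
          apply ENNReal.ofReal_le_ofReal
          have hx : (0 : ℝ) ≤ M / |ξ₂| ^ 3 := by positivity
          have e1 : 2 * L + 2 * L = 8 / 3 * (M / |ξ₂| ^ 3) := by
            rw [hLdef]; field_simp; ring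
          have e2 : 3 * M / |ξ₂| ^ 3 = 3 * (M / |ξ₂| ^ 3) := by ring
          rw [e1, e2]; linarith
  exact ENNReal.toReal_le_of_le_ofReal (by positivity) hvol
end

section
/- For every β ∈ ℝ there exist ρ > 0, K ≥ 1, and C > 0 (depending only on β) such that for all α ∈ ℝ, all M ≥ 1, and all ξ₂ ∈ ℝ with |ξ₂| ≥ K, the Lebesgue measure of the set { ξ₁ ∈ ℝ : |ξ₁ + ξ₂| ≤ ρ and |Φ_β(ξ₁ + ξ₂, ξ₁, ξ₂) − α| ≤ M } is at most C · M / ξ₂⁴. -/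
open MeasureTheory

lemma kaw_hasDerivAt (β ξ₂ x : ℝ) :
    HasDerivAt (fun x => Phi β (x+ξ₂) x ξ₂)
      (5*x^4 - 5*(x+ξ₂)^4 + β*(3*x^2 - 3*(x+ξ₂)^2)) x := by
  have hid : HasDerivAt (fun x : ℝ => x + ξ₂) 1 x := (hasDerivAt_id x).add_const ξ₂
  have h5 : HasDerivAt (fun x : ℝ => (x+ξ₂)^5) ((5:ℕ) * (x+ξ₂)^4 * 1) x := hid.pow 5
  have h3 : HasDerivAt (fun x : ℝ => (x+ξ₂)^3) ((3:ℕ) * (x+ξ₂)^2 * 1) x := hid.pow 3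
  have hx5 : HasDerivAt (fun x : ℝ => x^5) ((5:ℕ) * x^4 * 1) x := (hasDerivAt_id x).pow 5
  have hx3 : HasDerivAt (fun x : ℝ => x^3) ((3:ℕ) * x^2 * 1) x := (hasDerivAt_id x).pow 3
  have h := (((hx5.add_const (ξ₂^5)).sub h5).add
    (((hx3.add_const (ξ₂^3)).sub h3).const_mul β))
  have e : (fun x : ℝ => x^5 + ξ₂^5 - (x+ξ₂)^5 + β * (x^3 + ξ₂^3 - (x+ξ₂)^3))
      = (fun x => Phi β (x+ξ₂) x ξ₂) := by
    funext y; simp [Phi]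
  replace h : HasDerivAt (fun x : ℝ => x^5 + ξ₂^5 - (x+ξ₂)^5 + β * (x^3 + ξ₂^3 - (x+ξ₂)^3)) _ x := h
  rw [e] at h
  convert h using 1
  push_cast; ring

set_option maxHeartbeats 1000000 in
lemma kaw_lb_aux (β ξ₂ w : ℝ) (hK : 10*(1+|β|) ≤ |ξ₂|) (hz : |w| ≤ 1) :
    ξ₂^4/16 ≤ 5*(w-ξ₂)^4 - 5*w^4 + β*(3*(w-ξ₂)^2 - 3*w^2) := by
  set t := |ξ₂| with ht
  set B := |β| with hB
  have hB0 : 0 ≤ B := abs_nonneg β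
  have ht2 : t^2 = ξ₂^2 := sq_abs ξ₂
  have ht4 : t^4 = ξ₂^4 := by nlinarith [sq_abs ξ₂]
  have hw1 : -1 ≤ w := (abs_le.1 hz).1
  have hw2 : w ≤ 1 := (abs_le.1 hz).2
  have ht10 : 10 + 10*B ≤ t := by nlinarith
  have habs : t - 1 ≤ |w - ξ₂| := by
    have h1 := abs_sub_abs_le_abs_sub ξ₂ w
    have h2 : |ξ₂ - w| = |w - ξ₂| := abs_sub_comm _ _
    linarith [h1, h2.le, hz]
  have h1 : (t-1)^2 ≤ (w-ξ₂)^2 := by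
    have h0 : 0 ≤ t - 1 := by nlinarith
    nlinarith [sq_abs (w - ξ₂), abs_nonneg (w - ξ₂)]
  have h2 : (t-1)^4 ≤ (w-ξ₂)^4 := by
    nlinarith [sq_nonneg (w-ξ₂), sq_nonneg (t-1), sq_nonneg ((w-ξ₂)^2 - (t-1)^2)]
  have h3 : (w-ξ₂)^2 ≤ (t+1)^2 := by
    have h4 : |w - ξ₂| ≤ t + 1 := by
      calc |w - ξ₂| ≤ |w| + |ξ₂| := abs_sub _ _
        _ ≤ 1 + t := add_le_add hz le_rfl
        _ = t + 1 := by ring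
    nlinarith [sq_abs (w - ξ₂), abs_nonneg (w-ξ₂)]
  have hbeta : -(B*(3*(t+1)^2+3)) ≤ β*(3*(w-ξ₂)^2 - 3*w^2) := by
    have hX : |3*(w-ξ₂)^2 - 3*w^2| ≤ 3*(t+1)^2 + 3 := by
      have h5 := abs_sub (3*(w-ξ₂)^2) (3*w^2)
      have e1 : |3*(w-ξ₂)^2| = 3*(w-ξ₂)^2 := abs_of_nonneg (by positivity)
      have e2 : |3*w^2| = 3*w^2 := abs_of_nonneg (by positivity)
      nlinarith [sq_nonneg w]
    have h6 := neg_abs_le (β*(3*(w-ξ₂)^2 - 3*w^2))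
    have h7 : |β*(3*(w-ξ₂)^2 - 3*w^2)| = B * |3*(w-ξ₂)^2 - 3*w^2| := abs_mul _ _
    nlinarith [abs_nonneg (3*(w-ξ₂)^2 - 3*w^2)]
  have hw2' : w^2 ≤ 1 := by nlinarith
  have hw4 : w^4 ≤ 1 := by
    have hm := mul_nonneg (by linarith : (0:ℝ) ≤ 1 - w^2) (by positivity : (0:ℝ) ≤ 1 + w^2)
    have hx : (1 - w^2)*(1 + w^2) = 1 - w^4 := by ring
    linarith [hx ▸ hm]
  -- arithmetic core
  have hta : (10:ℝ) ≤ t := by linarith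
  have p1 : (0:ℝ) ≤ (t-10)*t^2 := mul_nonneg (by linarith) (sq_nonneg t)
  have p2 : (0:ℝ) ≤ (t-10)*t := mul_nonneg (by linarith) (by linarith)
  have e1 : t^4 ≤ 2*(t-1)^4 := by nlinarith [p1, p2, sq_nonneg (t-10)]
  have e3 : 3*B*(t+1)^2 ≤ 5*B*(t-1)^2 := by
    have : (t+1)^2 ≤ (121/81)*(t-1)^2 := by nlinarith [sq_nonneg (t-10)]
    nlinarith [mul_nonneg hB0 (sq_nonneg (t-1)), mul_le_mul_of_nonneg_left this hB0]
  have e4 : B ≤ (t-1)/10 := by linarith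
  have e5 : 5*B*(t-1)^2 ≤ (t-1)^3/2 := by
    nlinarith [mul_le_mul_of_nonneg_right e4 (sq_nonneg (t-1))]
  have key : ξ₂^4/16 ≤ 5*(t-1)^4 - 5 - (B*(3*(t+1)^2+3)) := by
    rw [← ht4]
    have q1 : (0:ℝ) ≤ (t-10)*(t-1)^2 := mul_nonneg (by linarith) (sq_nonneg (t-1))
    have q2 : (0:ℝ) ≤ ((t-1)^2 - 81)*(t-1)^2 := by nlinarith [sq_nonneg (t-1), sq_nonneg (t-10)]
    nlinarith [e1, e3, e4, e5, q1, q2, sq_nonneg (t-1)]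
  linarith [key, h2, hbeta, hw4, mul_le_mul_of_nonneg_left hw4 (by norm_num : (0:ℝ) ≤ 5),
    mul_le_mul_of_nonneg_left h2 (by norm_num : (0:ℝ) ≤ 5)]

lemma kaw_deriv_lb (β ξ₂ z : ℝ) (hK : 10*(1+|β|) ≤ |ξ₂|) (hz : |z+ξ₂| ≤ 1) :
    ξ₂^4/16 ≤ 5*z^4 - 5*(z+ξ₂)^4 + β*(3*z^2 - 3*(z+ξ₂)^2) := by
  have h := kaw_lb_aux β ξ₂ (z+ξ₂) hK hz
  have e : 5*((z+ξ₂)-ξ₂)^4 - 5*(z+ξ₂)^4 + β*(3*((z+ξ₂)-ξ₂)^2 - 3*(z+ξ₂)^2)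
      = 5*z^4 - 5*(z+ξ₂)^4 + β*(3*z^2 - 3*(z+ξ₂)^2) := by ring
  linarith [e ▸ h]

/-- Sublevel-set measure bound in the regime `|ξ| ≲ 1 ≪ |ξ₁| ∼ |ξ₂|`: for `|ξ₂|` large, the set
of `ξ₁` with `|ξ₁ + ξ₂| ≤ ρ` and `|Φ_β(ξ₁ + ξ₂, ξ₁, ξ₂) − α| ≤ M` has measure `≲ M/ξ₂⁴`. -/
theorem kawahara_sublevel_measure_case4 (β : ℝ) :
    ∃ ρ > (0 : ℝ), ∃ K : ℝ, 1 ≤ K ∧ ∃ C > 0,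
      ∀ (α M ξ₂ : ℝ), 1 ≤ M → K ≤ |ξ₂| →
        (volume {ξ₁ : ℝ | |ξ₁ + ξ₂| ≤ ρ ∧ |Phi β (ξ₁ + ξ₂) ξ₁ ξ₂ - α| ≤ M}).toReal
          ≤ C * M / ξ₂ ^ 4 := by
  refine ⟨1, one_pos, 10*(1+|β|), by nlinarith [abs_nonneg β], 64, by norm_num, ?_⟩
  intro α M ξ₂ hM hK
  have hM0 : (0:ℝ) ≤ M := by linarith
  have hξ₂ : (0:ℝ) < ξ₂^4 := by
    have h10 : (10:ℝ) ≤ |ξ₂| := by nlinarith [abs_nonneg β]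
    have h0 : ξ₂ ≠ 0 := by
      intro h; rw [h, abs_zero] at h10; linarith
    positivity
  set f : ℝ → ℝ := fun x => Phi β (x+ξ₂) x ξ₂ with hf
  set S : Set ℝ := {ξ₁ : ℝ | |ξ₁ + ξ₂| ≤ (1:ℝ) ∧ |Phi β (ξ₁ + ξ₂) ξ₁ ξ₂ - α| ≤ M} with hS
  set d : ℝ := 32*M/ξ₂^4 with hd
  have hd0 : 0 ≤ d := by positivity
  rcases Set.eq_empty_or_nonempty S with h | ⟨s₀, hs₀⟩
  · rw [h]
    simp only [measure_empty, ENNReal.toReal_zero]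
    positivity
  · have hfc : Continuous f := by
      simp only [hf, Phi]
      continuity
    have key : ∀ x ∈ S, ∀ y ∈ S, x < y → y - x ≤ d := by
      intro x hx y hy hlt
      obtain ⟨hx1, hx2⟩ := hx
      obtain ⟨hy1, hy2⟩ := hy
      obtain ⟨c, hc, hcs⟩ := exists_hasDerivAt_eq_slope f
        (fun z => 5*z^4 - 5*(z+ξ₂)^4 + β*(3*z^2 - 3*(z+ξ₂)^2)) hlt
        hfc.continuousOn (fun z _ => kaw_hasDerivAt β ξ₂ z)
      have hcz : |c + ξ₂| ≤ 1 := by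
        rw [abs_le] at hx1 hy1 ⊢
        constructor
        · linarith [hc.1]
        · linarith [hc.2]
      have hlb := kaw_deriv_lb β ξ₂ c hK hcz
      rw [hcs] at hlb
      have hxy : (0:ℝ) < y - x := sub_pos.2 hlt
      have h1 : ξ₂^4/16 * (y-x) ≤ f y - f x := (le_div_iff₀ hxy).1 hlb
      have h2M : f y - f x ≤ 2*M := by
        rw [abs_le] at hx2 hy2
        simp only [hf] at *
        linarith [hx2.1, hy2.2]
      rw [hd, le_div_iff₀ hξ₂]
      have e : (y-x)*ξ₂^4 = 16*(ξ₂^4/16*(y-x)) := by ring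
      rw [e]
      linarith
    have hsub : S ⊆ Set.Icc (s₀ - d) (s₀ + d) := by
      intro s hs
      rcases lt_trichotomy s s₀ with h | h | h
      · have := key s hs s₀ hs₀ h
        exact ⟨by linarith, by linarith⟩
      · exact ⟨by rw [h]; linarith, by rw [h]; linarith⟩
      · have := key s₀ hs₀ s hs h
        exact ⟨by linarith, by linarith⟩
    have hvol : volume S ≤ volume (Set.Icc (s₀ - d) (s₀ + d)) := measure_mono hsub
    have htr : (volume S).toReal ≤ (volume (Set.Icc (s₀ - d) (s₀ + d))).toReal := by
      refine ENNReal.toReal_mono ?_ hvol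
      rw [Real.volume_Icc]
      exact ENNReal.ofReal_ne_top
    rw [Real.volume_Icc, ENNReal.toReal_ofReal (by linarith)] at htr
    calc (volume S).toReal ≤ (s₀ + d) - (s₀ - d) := htr
      _ = 64 * M / ξ₂ ^ 4 := by rw [hd]; ring
end
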